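/- arXiv:2505.19738 — 6 statements merged into one kernel-verified Lean document; each statement's English description precedes it below -/
import Mathlib

section
/- Let 0<α<1 and T>0, and let u:[0,T]→ℝ be continuously differentiable. Then for every t∈(0,T], u(t)·∂_t^α u(t) ≥ (1/2)·∂_t^α(u²)(t); equivalently, u(t)·∫₀^t (t−s)^{−α} u′(s) ds ≥ ∫₀^t (t−s)^{−α} u(s)u′(s) ds. -/
open MeasureTheory intervalIntegral Set Filter Topology

lemma alik_integrable (α t : ℝ) (hα0 : 0 < α) (hα1 : α < 1) (ht : 0 < t)
    {φ : ℝ → ℝ} (hφ : ContinuousOn φ (Set.Icc 0 t)) :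
    IntervalIntegrable (fun s => (t - s) ^ (-α) * φ s) volume 0 t := by
  obtain ⟨C, hC⟩ := isCompact_Icc.exists_bound_of_continuousOn hφ
  have hC0 : 0 ≤ C := le_trans (norm_nonneg _) (hC 0 (by constructor <;> simp [ht.le]))
  have h1 : IntervalIntegrable (fun x : ℝ => x ^ (-α)) volume t 0 :=
    intervalIntegrable_rpow' (by linarith)
  have h2 : IntervalIntegrable (fun x : ℝ => (t - x) ^ (-α)) volume 0 t := by
    simpa using h1.comp_sub_left t
  have hbase : IntervalIntegrable (fun x : ℝ => (t - x) ^ (-α) * C) volume 0 t :=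
    h2.mul_const C
  apply hbase.mono_fun'
  · apply AEStronglyMeasurable.mul
    · exact h2.def'.1
    · have : Set.uIoc (0:ℝ) t ⊆ Set.Icc 0 t := by
        rw [Set.uIoc_of_le ht.le]; exact Set.Ioc_subset_Icc_self
      exact ((hφ.mono this).aestronglyMeasurable measurableSet_uIoc)
  · rw [Filter.EventuallyLE, ae_restrict_iff' measurableSet_uIoc]
    apply Filter.Eventually.of_forall
    intro x hx
    rw [Set.uIoc_of_le ht.le] at hx
    have h3 : (0:ℝ) ≤ (t - x) ^ (-α) := Real.rpow_nonneg (by linarith [hx.2]) _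
    have h4 : |φ x| ≤ C := hC x ⟨hx.1.le, hx.2⟩
    calc ‖(t - x) ^ (-α) * φ x‖ = (t - x) ^ (-α) * |φ x| := by
          rw [norm_mul, Real.norm_eq_abs, abs_of_nonneg h3]; rfl
      _ ≤ (t - x) ^ (-α) * C := by nlinarith

/-- Alikhanov's inequality: for `0 < α < 1` and a continuously differentiable
`u : [0,T] → ℝ`, for every `t ∈ (0,T]` we have
`u(t) · ∫₀ᵗ (t−s)^{−α} u′(s) ds ≥ ∫₀ᵗ (t−s)^{−α} u(s) u′(s) ds`,
which is the inequality `u(t) ∂_t^α u(t) ≥ (1/2) ∂_t^α (u²)(t)` after dividing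
by `Γ(1−α)` and using `(u²)′ = 2 u u′`. -/
theorem alikhanov_inequality (α T : ℝ) (hα0 : 0 < α) (hα1 : α < 1) (hT : 0 < T)
    (u u' : ℝ → ℝ)
    (hderiv : ∀ s ∈ Set.Icc (0:ℝ) T, HasDerivAt u (u' s) s)
    (hcont : ContinuousOn u' (Set.Icc (0:ℝ) T)) :
    ∀ t ∈ Set.Ioc (0:ℝ) T,
      u t * ∫ s in (0:ℝ)..t, (t - s) ^ (-α) * u' s ≥
        ∫ s in (0:ℝ)..t, (t - s) ^ (-α) * (u s * u' s) := by
  intro t ht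
  obtain ⟨ht0, htT⟩ := ht
  have hsub : Set.Icc (0:ℝ) t ⊆ Set.Icc 0 T := Set.Icc_subset_Icc le_rfl htT
  have hu'c : ContinuousOn u' (Set.Icc 0 t) := hcont.mono hsub
  have huc : ContinuousOn u (Set.Icc 0 t) := fun x hx =>
    (hderiv x (hsub hx)).continuousAt.continuousWithinAt
  -- the function h
  set h : ℝ → ℝ := fun s => (t - s) ^ (-α) * (u' s * (u t - u s)) with hh
  have hφc : ContinuousOn (fun s => u' s * (u t - u s)) (Set.Icc 0 t) :=
    hu'c.mul (continuousOn_const.sub huc)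
  have hi3 : IntervalIntegrable h volume 0 t := alik_integrable α t hα0 hα1 ht0 hφc
  have hi1 : IntervalIntegrable (fun s => (t - s) ^ (-α) * u' s) volume 0 t :=
    alik_integrable α t hα0 hα1 ht0 hu'c
  have hi2 : IntervalIntegrable (fun s => (t - s) ^ (-α) * (u s * u' s)) volume 0 t :=
    alik_integrable α t hα0 hα1 ht0 (huc.mul hu'c)
  -- bound on u'
  obtain ⟨M, hM⟩ := isCompact_Icc.exists_bound_of_continuousOn hu'c
  have hM0 : 0 ≤ M := le_trans (norm_nonneg _) (hM 0 ⟨le_rfl, ht0.le⟩)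
  -- the primitive
  set F : ℝ → ℝ := fun b => ∫ s in (0:ℝ)..b, h s with hF
  have hFcont : ContinuousOn F (Set.uIcc 0 t) :=
    continuousOn_primitive_interval' hi3 (by simp [Set.uIcc_of_le ht0.le, ht0.le])
  -- key estimate on [0, t)
  have key : ∀ b ∈ Set.Ico (0:ℝ) t, -(M^2/2) * (t - b)^(2 - α) ≤ F b := by
    intro b hb
    obtain ⟨hb0, hbt⟩ := hb
    have htb : 0 < t - b := by linarith
    -- integration by parts on [0, b]
    have hUicc : Set.uIcc (0:ℝ) b = Set.Icc 0 b := Set.uIcc_of_le hb0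
    have hKd : ∀ x ∈ Set.uIcc (0:ℝ) b,
        HasDerivAt (fun x => (t - x) ^ (-α)) (α * (t - x) ^ (-α - 1)) x := by
      intro x hx
      rw [hUicc] at hx
      have hxt : t - x ≠ 0 := by have h2 := hx.2; intro hc; nlinarith [hbt]
      have hder : HasDerivAt (fun y : ℝ => t - y) (-1) x := by
        simpa using (hasDerivAt_id x).const_sub t
      have := hder.rpow_const (p := -α) (Or.inl hxt)
      convert this using 1
      ring
    have hVd : ∀ x ∈ Set.uIcc (0:ℝ) b,
        HasDerivAt (fun x => -((u t - u x)^2 / 2)) (u' x * (u t - u x)) x := by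
      intro x hx
      rw [hUicc] at hx
      have hx' : x ∈ Set.Icc 0 T := hsub ⟨hx.1, le_trans hx.2 (by linarith)⟩
      have := (((hderiv x hx').const_sub (u t)).pow 2).div_const 2 |>.neg
      exact this.congr_deriv (by ring)
    have hKint : IntervalIntegrable (fun x => α * (t - x) ^ (-α - 1)) volume 0 b := by
      apply ContinuousOn.intervalIntegrable
      rw [hUicc]
      apply ContinuousOn.mul continuousOn_const
      apply ContinuousOn.rpow_const (continuous_const.sub continuous_id).continuousOn
      intro x hx
      exact Or.inl (by intro hc; simp only [Pi.sub_apply, sub_eq_zero, id_eq] at hc; have := hx.2; linarith)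
    have hVint : IntervalIntegrable (fun x => u' x * (u t - u x)) volume 0 b := by
      apply ContinuousOn.intervalIntegrable
      rw [hUicc]
      exact hφc.mono (Set.Icc_subset_Icc le_rfl hbt.le)
    have hibp := intervalIntegral.integral_mul_deriv_eq_deriv_mul hKd hVd hKint hVint
    -- F b = ∫₀^b K * V'
    have hFb : F b = (t - b) ^ (-α) * (-((u t - u b)^2 / 2))
        - (t - 0) ^ (-α) * (-((u t - u 0)^2 / 2))
        - ∫ x in (0:ℝ)..b, α * (t - x) ^ (-α - 1) * (-((u t - u x)^2 / 2)) := hibp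
    -- nonnegativity of the correction terms
    have hterm1 : 0 ≤ (t - 0) ^ (-α) * ((u t - u 0)^2 / 2) := by
      apply mul_nonneg (Real.rpow_nonneg (by linarith) _); positivity
    have hterm2 : (∫ x in (0:ℝ)..b, α * (t - x) ^ (-α - 1) * (-((u t - u x)^2 / 2))) ≤ 0 := by
      rw [← neg_nonneg, ← intervalIntegral.integral_neg]
      apply intervalIntegral.integral_nonneg hb0
      intro x hx
      have : (0:ℝ) ≤ (t - x) ^ (-α - 1) := Real.rpow_nonneg (by linarith [hx.2]) _
      have h2 : (0:ℝ) ≤ (u t - u x)^2 / 2 := by positivity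
      have := mul_nonneg (mul_nonneg hα0.le this) h2
      nlinarith
    -- bound on (u t - u b)^2
    have hub : |u t - u b| ≤ M * (t - b) := by
      have hft : u t - u b = ∫ x in b..t, u' x := by
        rw [intervalIntegral.integral_eq_sub_of_hasDerivAt]
        · intro x hx
          rw [Set.uIcc_of_le hbt.le] at hx
          exact hderiv x (hsub ⟨le_trans hb0 hx.1, hx.2⟩)
        · apply ContinuousOn.intervalIntegrable
          rw [Set.uIcc_of_le hbt.le]
          exact hu'c.mono (Set.Icc_subset_Icc hb0 le_rfl)
      rw [hft]
      have := intervalIntegral.norm_integral_le_of_norm_le_const (C := M)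
        (f := u') (a := b) (b := t) ?_
      · rw [Real.norm_eq_abs] at this
        calc |∫ x in b..t, u' x| ≤ M * |t - b| := this
          _ = M * (t - b) := by rw [abs_of_pos htb]
      · intro x hx
        rw [Set.uIoc_of_le hbt.le] at hx
        exact hM x ⟨le_trans hb0 hx.1.le, hx.2⟩
    have hsq : (u t - u b)^2 ≤ (M * (t - b))^2 := by
      have := sq_abs (u t - u b)
      nlinarith [abs_nonneg (u t - u b)]
    -- combine
    have hKb : (0:ℝ) ≤ (t - b) ^ (-α) := Real.rpow_nonneg htb.le _
    have hmain : -((t - b) ^ (-α) * ((u t - u b)^2 / 2)) ≤ F b := by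
      rw [hFb]; nlinarith
    refine le_trans ?_ hmain
    rw [neg_mul, neg_le_neg_iff]
    have hpow : (t - b) ^ (-α) * (t - b)^2 = (t - b)^(2 - α) := by
      rw [← Real.rpow_two, ← Real.rpow_add htb]
      ring_nf
    calc (t - b) ^ (-α) * ((u t - u b)^2 / 2)
        ≤ (t - b) ^ (-α) * ((M * (t - b))^2 / 2) := by
          apply mul_le_mul_of_nonneg_left _ hKb; linarith
      _ = M^2/2 * ((t - b) ^ (-α) * (t - b)^2) := by ring
      _ = M^2/2 * (t - b)^(2 - α) := by rw [hpow]
  -- pass to the limit b → t⁻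
  have hFt : 0 ≤ F t := by
    have hne : (𝓝[<] t).NeBot := inferInstance
    have hmem : ∀ᶠ b in 𝓝[<] t, b ∈ Set.Ioo (0:ℝ) t :=
      Ioo_mem_nhdsLT_of_mem ⟨ht0, le_rfl⟩
    have hle : 𝓝[<] t ≤ 𝓝[Set.uIcc 0 t] t := by
      refine le_trans (nhdsWithin_le_iff.mpr hmem) (nhdsWithin_mono _ ?_)
      rw [Set.uIcc_of_le ht0.le]
      exact Set.Ioo_subset_Icc_self
    have hFlim : Filter.Tendsto F (𝓝[<] t) (𝓝 (F t)) :=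
      (hFcont.continuousWithinAt (by simp [Set.uIcc_of_le ht0.le, ht0.le])).mono_left hle
    have hglim : Filter.Tendsto (fun b => -(M^2/2) * (t - b)^(2 - α)) (𝓝[<] t) (𝓝 0) := by
      have hc : ContinuousAt (fun b : ℝ => -(M^2/2) * (t - b)^(2 - α)) t := by
        apply ContinuousAt.mul continuousAt_const
        exact (Real.continuousAt_rpow_const _ _ (Or.inr (by linarith))).comp
          ((continuous_const.sub continuous_id).continuousAt)
      have h0 : -(M^2/2) * (t - t)^(2 - α) = 0 := by
        rw [sub_self, Real.zero_rpow (by linarith), mul_zero]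
      rw [← h0]
      exact (hc.tendsto).mono_left nhdsWithin_le_nhds
    refine le_of_tendsto_of_tendsto hglim hFlim ?_
    filter_upwards [hmem] with b hb
    exact key b ⟨hb.1.le, hb.2⟩
  -- conclude
  have hsplit : u t * (∫ s in (0:ℝ)..t, (t - s) ^ (-α) * u' s)
      - ∫ s in (0:ℝ)..t, (t - s) ^ (-α) * (u s * u' s) = F t := by
    rw [← intervalIntegral.integral_const_mul,
      ← intervalIntegral.integral_sub (hi1.const_mul (u t)) hi2]
    apply intervalIntegral.integral_congr
    intro x hx
    simp only [hh]
    ring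
  rw [ge_iff_le, ← sub_nonneg, hsplit]
  exact hFt
end

section
/- Let 0<α<1, l>0, T>0. Let p:[0,T]→ℝ be continuous with p(t)≥0, f:[0,l]×[0,T]→ℝ continuous, and u:[0,l]×[0,T]→ℝ continuous, continuously differentiable in t, twice continuously differentiable in x, satisfying ∂_t^α u − u_xx + p(t)u = f on (0,l)×(0,T] with u(0,t)=u(l,t)=0. Then for every t∈(0,T]: (1/Γ(1−α)) ∫₀^t (t−s)^{−α} (d/ds ∫₀^l u(x,s)² dx) ds ≤ (l²/(2π²)) ∫₀^l f(x,t)² dx. -/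
open intervalIntegral Real Set Filter MeasureTheory
open scoped Topology

/-- Optimal Poincaré (Wirtinger) inequality on `[0,l]` with Dirichlet BC. -/
lemma wirtinger_ineq (l : ℝ) (hl : 0 < l) (g g' : ℝ → ℝ)
    (hg : ∀ x ∈ Set.Icc (0:ℝ) l, HasDerivAt g (g' x) x)
    (hg' : ContinuousOn g' (Set.Icc 0 l))
    (h0 : g 0 = 0) (hL : g l = 0) :
    (Real.pi / l) ^ 2 * ∫ x in (0:ℝ)..l, (g x) ^ 2 ≤ ∫ x in (0:ℝ)..l, (g' x) ^ 2 := by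
  set c : ℝ := Real.pi / l with hc
  have hcpos : 0 < c := div_pos Real.pi_pos hl
  have hgc : ContinuousOn g (Set.Icc 0 l) := fun x hx => (hg x hx).continuousAt.continuousWithinAt
  -- h = integrand
  set h : ℝ → ℝ := fun x => (g' x) ^ 2 - c ^ 2 * (g x) ^ 2 with hh
  have hhc : ContinuousOn h (Set.Icc 0 l) := by
    apply ContinuousOn.sub (hg'.pow 2)
    exact (continuousOn_const.mul (hgc.pow 2))
  -- sin positivity on (0,l)
  have hsin : ∀ x ∈ Set.Ioo (0:ℝ) l, 0 < Real.sin (c * x) := by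
    intro x hx
    apply Real.sin_pos_of_pos_of_lt_pi (mul_pos hcpos hx.1)
    have : c * x < c * l := by nlinarith [hx.2]
    simpa [hc, div_mul_cancel₀ Real.pi hl.ne'] using this
  -- cotangent-type auxiliary function
  set B : ℝ → ℝ := fun x => c * (g x) ^ 2 * (Real.cos (c * x) / Real.sin (c * x)) with hB
  set B' : ℝ → ℝ := fun x =>
    c * ((2 * g x * g' x) * (Real.cos (c * x) / Real.sin (c * x))
      + (g x) ^ 2 * (-c / Real.sin (c * x) ^ 2)) with hB'
  have hBd : ∀ x ∈ Set.Ioo (0:ℝ) l, HasDerivAt B (B' x) x := by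
    intro x hx
    have hs := (hsin x hx).ne'
    have d1 : HasDerivAt (fun y => (g y) ^ 2) (2 * g x * g' x) x := by
      have := (hg x (Set.mem_Icc_of_Ioo hx)).pow 2
      exact this.congr_deriv (by norm_num [mul_comm, mul_assoc, mul_left_comm])
    have dsin : HasDerivAt (fun y => Real.sin (c * y)) (Real.cos (c * x) * c) x := by
      exact ((Real.hasDerivAt_sin (c * x)).comp x ((hasDerivAt_id x).const_mul c)).congr_deriv (by simp)
    have dcos : HasDerivAt (fun y => Real.cos (c * y)) (-Real.sin (c * x) * c) x := by
      exact ((Real.hasDerivAt_cos (c * x)).comp x ((hasDerivAt_id x).const_mul c)).congr_deriv (by simp)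
    have dcot : HasDerivAt (fun y => Real.cos (c * y) / Real.sin (c * y))
        (-c / Real.sin (c * x) ^ 2) x := by
      have h1 := Real.sin_sq_add_cos_sq (c * x)
      have hnum : -Real.sin (c*x) * c * Real.sin (c*x) - Real.cos (c*x) * (Real.cos (c*x) * c)
          = -c := by nlinarith [h1]
      have := dcos.div dsin hs
      rw [hnum] at this
      exact this
    have heq : B = fun y => c * ((g y) ^ 2 * (Real.cos (c * y) / Real.sin (c * y))) := by
      funext y; simp only [hB]; ring
    rw [heq]
    exact (d1.mul dcot).const_mul c
  -- key subinterval inequality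
  have hkey : ∀ a ∈ Set.Ioo (0:ℝ) l, ∀ b ∈ Set.Ioo (0:ℝ) l, a ≤ b →
      B b - B a ≤ ∫ x in a..b, h x := by
    intro a ha b hb hab
    have hsub : Set.Icc a b ⊆ Set.Ioo 0 l := fun x hx =>
      ⟨lt_of_lt_of_le ha.1 hx.1, lt_of_le_of_lt hx.2 hb.2⟩
    have hsub' : Set.Icc a b ⊆ Set.Icc 0 l := hsub.trans Set.Ioo_subset_Icc_self
    have hB'c : ContinuousOn B' (Set.Icc a b) := by
      have hsc : ContinuousOn (fun x => Real.sin (c * x)) (Set.Icc a b) :=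
        (Real.continuous_sin.comp (continuous_const.mul continuous_id)).continuousOn
      have hcc : ContinuousOn (fun x => Real.cos (c * x)) (Set.Icc a b) :=
        (Real.continuous_cos.comp (continuous_const.mul continuous_id)).continuousOn
      have hsne : ∀ x ∈ Set.Icc a b, Real.sin (c * x) ≠ 0 := fun x hx => (hsin x (hsub hx)).ne'
      apply ContinuousOn.mul continuousOn_const
      apply ContinuousOn.add
      · exact ((continuousOn_const.mul (hgc.mono hsub')).mul (hg'.mono hsub')).mul
          (hcc.div hsc hsne)
      · exact ((hgc.mono hsub').pow 2).mul
          (continuousOn_const.div (hsc.pow 2) (fun x hx => pow_ne_zero 2 (hsne x hx)))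
    have hB'int : IntervalIntegrable B' volume a b := by
      apply ContinuousOn.intervalIntegrable
      rwa [Set.uIcc_of_le hab]
    have hhint : IntervalIntegrable h volume a b := by
      apply ContinuousOn.intervalIntegrable
      rw [Set.uIcc_of_le hab]; exact hhc.mono hsub'
    have hftc : ∫ x in a..b, B' x = B b - B a := by
      apply intervalIntegral.integral_eq_sub_of_hasDerivAt
      · intro x hx
        rw [Set.uIcc_of_le hab] at hx
        exact hBd x (hsub hx)
      · exact hB'int
    rw [← hftc]
    apply intervalIntegral.integral_mono_on hab hB'int hhint
    intro x hx
    have hsp := hsin x (hsub hx)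
    have h1 := Real.sin_sq_add_cos_sq (c * x)
    simp only [hB', hh]
    rw [← sub_nonneg]
    have hs2 : (0:ℝ) < Real.sin (c*x) ^ 2 := by positivity
    have h2 : g' x ^ 2 - c ^ 2 * g x ^ 2
        - c * (2 * g x * g' x * (Real.cos (c * x) / Real.sin (c * x))
          + g x ^ 2 * (-c / Real.sin (c * x) ^ 2))
        = (Real.sin (c*x) * g' x - c * g x * Real.cos (c*x)) ^ 2 / Real.sin (c*x) ^ 2 := by
      rw [eq_div_iff hs2.ne']
      field_simp
      linear_combination (-(c^2 * g x^2)) * h1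
    rw [h2]
    positivity
  -- integrability of h on subintervals of [0,l]
  have hint : ∀ a b : ℝ, a ∈ Set.Icc (0:ℝ) l → b ∈ Set.Icc (0:ℝ) l →
      IntervalIntegrable h volume a b := by
    intro a b ha hb
    apply ContinuousOn.intervalIntegrable
    apply hhc.mono
    have h1 : a ∈ Set.uIcc (0:ℝ) l := by rwa [Set.uIcc_of_le hl.le]
    have h2 : b ∈ Set.uIcc (0:ℝ) l := by rwa [Set.uIcc_of_le hl.le]
    have := Set.uIcc_subset_uIcc h1 h2
    rwa [Set.uIcc_of_le hl.le] at this
  -- bound for h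
  obtain ⟨Mh, hMh⟩ := (isCompact_Icc).exists_bound_of_continuousOn hhc
  -- main claim : 0 ≤ ∫ h
  have hmain : 0 ≤ ∫ x in (0:ℝ)..l, h x := by
    set Φ : Filter (ℝ × ℝ) := (𝓝[>] (0:ℝ)) ×ˢ (𝓝[<] l) with hΦ
    have hmem : (Set.Ioo (0:ℝ) (l/2) ×ˢ Set.Ioo (l/2) l) ∈ Φ := by
      apply Filter.prod_mem_prod
      · exact Ioo_mem_nhdsGT_of_mem ⟨le_refl 0, half_pos hl⟩
      · exact Ioo_mem_nhdsLT_of_mem ⟨half_lt_self hl, le_refl l⟩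
    -- eventual inequality
    have hev : ∀ᶠ q : ℝ × ℝ in Φ,
        (B q.2 - B q.1) + ((∫ x in (0:ℝ)..q.1, h x) + (∫ x in q.2..l, h x))
          ≤ ∫ x in (0:ℝ)..l, h x := by
      filter_upwards [hmem] with q hq
      obtain ⟨hq1, hq2⟩ := hq
      have ha : q.1 ∈ Set.Ioo (0:ℝ) l := ⟨hq1.1, hq1.2.trans (half_lt_self hl)⟩
      have hb : q.2 ∈ Set.Ioo (0:ℝ) l := ⟨(half_pos hl).trans hq2.1, hq2.2⟩
      have hab : q.1 ≤ q.2 := (hq1.2.trans hq2.1).le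
      have i1 := hint 0 q.1 ⟨le_refl 0, hl.le⟩ (Set.mem_Icc_of_Ioo ha)
      have i2 := hint q.1 q.2 (Set.mem_Icc_of_Ioo ha) (Set.mem_Icc_of_Ioo hb)
      have i3 := hint q.2 l (Set.mem_Icc_of_Ioo hb) ⟨hl.le, le_refl l⟩
      have e1 := intervalIntegral.integral_add_adjacent_intervals i1 i2
      have e2 := intervalIntegral.integral_add_adjacent_intervals (i1.trans i2) i3
      have hk := hkey q.1 ha q.2 hb hab
      linarith [hk, e1, e2]
    -- tendsto of the left side to 0
    have tFl : Filter.Tendsto (fun a : ℝ => ∫ x in (0:ℝ)..a, h x) (𝓝[>] (0:ℝ)) (𝓝 0) := by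
      apply squeeze_zero_norm'
      · filter_upwards [Ioo_mem_nhdsGT_of_mem
          (⟨le_refl (0:ℝ), hl⟩ : (0:ℝ) ∈ Set.Ico (0:ℝ) l)] with a ha
        have : ∀ x ∈ Set.uIoc (0:ℝ) a, ‖h x‖ ≤ Mh := by
          intro x hx
          rw [Set.uIoc_of_le ha.1.le] at hx
          exact hMh x ⟨hx.1.le, hx.2.trans ha.2.le⟩
        calc ‖∫ x in (0:ℝ)..a, h x‖ ≤ Mh * |a - 0| :=
              intervalIntegral.norm_integral_le_of_norm_le_const this
          _ = Mh * |a| := by rw [sub_zero]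
      · have : Filter.Tendsto (fun a : ℝ => Mh * |a|) (𝓝 0) (𝓝 (Mh * |0|)) := by
          exact (continuous_const.mul (continuous_abs)).tendsto 0
        simpa using this.mono_left nhdsWithin_le_nhds
    have tFr : Filter.Tendsto (fun b : ℝ => ∫ x in b..l, h x) (𝓝[<] l) (𝓝 0) := by
      apply squeeze_zero_norm'
      · filter_upwards [Ioo_mem_nhdsLT_of_mem
          (⟨half_lt_self hl, le_refl l⟩ : l ∈ Set.Ioc (l/2) l)] with b hb
        have : ∀ x ∈ Set.uIoc b l, ‖h x‖ ≤ Mh := by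
          intro x hx
          rw [Set.uIoc_of_le hb.2.le] at hx
          exact hMh x ⟨((half_pos hl).trans hb.1).le.trans hx.1.le, hx.2⟩
        calc ‖∫ x in b..l, h x‖ ≤ Mh * |l - b| :=
              intervalIntegral.norm_integral_le_of_norm_le_const this
          _ = Mh * |l - b| := rfl
      · have : Filter.Tendsto (fun b : ℝ => Mh * |l - b|) (𝓝 l) (𝓝 (Mh * |l - l|)) :=
          (continuous_const.mul ((continuous_const.sub continuous_id).abs)).tendsto l
        simpa using this.mono_left nhdsWithin_le_nhds
    -- B tends to 0 at 0 from the right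
    have tB0 : Filter.Tendsto B (𝓝[>] (0:ℝ)) (𝓝 0) := by
      have hg0 := hg 0 ⟨le_refl 0, hl.le⟩
      have ha1 : Filter.Tendsto (fun a : ℝ => g a / a) (𝓝[>] (0:ℝ)) (𝓝 (g' 0)) := by
        have := (hasDerivAt_iff_tendsto_slope.mp hg0).mono_left
          (nhdsWithin_mono 0 (fun x (hx : x ∈ Set.Ioi (0:ℝ)) => ne_of_gt hx))
        apply this.congr'
        filter_upwards [self_mem_nhdsWithin] with a (ha : (0:ℝ) < a)
        simp [slope_def_field, h0]
      have ha2 : Filter.Tendsto g (𝓝[>] (0:ℝ)) (𝓝 0) := by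
        have := hg0.continuousAt.tendsto
        rw [h0] at this
        exact this.mono_left nhdsWithin_le_nhds
      have hsin0 : HasDerivAt (fun a : ℝ => Real.sin (c * a)) c 0 := by
        have := (Real.hasDerivAt_sin (c * 0)).comp 0 ((hasDerivAt_id (0:ℝ)).const_mul c)
        exact this.congr_deriv (by simp)
      have ha3 : Filter.Tendsto (fun a : ℝ => Real.sin (c * a) / a) (𝓝[>] (0:ℝ)) (𝓝 c) := by
        have := (hasDerivAt_iff_tendsto_slope.mp hsin0).mono_left
          (nhdsWithin_mono 0 (fun x (hx : x ∈ Set.Ioi (0:ℝ)) => ne_of_gt hx))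
        apply this.congr'
        filter_upwards [self_mem_nhdsWithin] with a (ha : (0:ℝ) < a)
        simp [slope_def_field]
      have ha4 : Filter.Tendsto (fun a : ℝ => a / Real.sin (c * a)) (𝓝[>] (0:ℝ)) (𝓝 c⁻¹) := by
        have := ha3.inv₀ hcpos.ne'
        apply this.congr
        intro a
        rw [inv_div]
      have ha5 : Filter.Tendsto (fun a : ℝ => Real.cos (c * a)) (𝓝[>] (0:ℝ)) (𝓝 1) := by
        have : Filter.Tendsto (fun a : ℝ => Real.cos (c * a)) (𝓝 (0:ℝ)) (𝓝 (Real.cos (c * 0))) :=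
          (Real.continuous_cos.comp (continuous_const.mul continuous_id)).tendsto 0
        simpa using this.mono_left nhdsWithin_le_nhds
      have := ((ha1.mul ha2).const_mul c).mul (ha5.mul ha4)
      have h00 : c * (g' 0 * 0) * (1 * c⁻¹) = 0 := by ring
      rw [h00] at this
      apply this.congr'
      filter_upwards [Ioo_mem_nhdsGT_of_mem
        (⟨le_refl (0:ℝ), hl⟩ : (0:ℝ) ∈ Set.Ico (0:ℝ) l)] with a ha
      have hane : a ≠ 0 := ha.1.ne'
      have hsne : Real.sin (c * a) ≠ 0 := (hsin a ha).ne'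
      simp only [hB]
      field_simp
    -- B tends to 0 at l from the left
    have tBl : Filter.Tendsto B (𝓝[<] l) (𝓝 0) := by
      have hgl := hg l ⟨hl.le, le_refl l⟩
      have hcl : c * l = Real.pi := by
        rw [hc]; field_simp
      have hb1 : Filter.Tendsto (fun b : ℝ => g b / (b - l)) (𝓝[<] l) (𝓝 (g' l)) := by
        have := (hasDerivAt_iff_tendsto_slope.mp hgl).mono_left
          (nhdsWithin_mono l (fun x (hx : x ∈ Set.Iio l) => ne_of_lt hx))
        apply this.congr'
        filter_upwards [self_mem_nhdsWithin] with b (hb : b < l)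
        simp [slope_def_field, hL]
      have hb2 : Filter.Tendsto g (𝓝[<] l) (𝓝 0) := by
        have := hgl.continuousAt.tendsto
        rw [hL] at this
        exact this.mono_left nhdsWithin_le_nhds
      have hsinl : HasDerivAt (fun b : ℝ => Real.sin (c * b)) (-c) l := by
        have := (Real.hasDerivAt_sin (c * l)).comp l ((hasDerivAt_id l).const_mul c)
        exact this.congr_deriv (by simp [hcl])
      have hb3 : Filter.Tendsto (fun b : ℝ => Real.sin (c * b) / (b - l)) (𝓝[<] l) (𝓝 (-c)) := by
        have := (hasDerivAt_iff_tendsto_slope.mp hsinl).mono_left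
          (nhdsWithin_mono l (fun x (hx : x ∈ Set.Iio l) => ne_of_lt hx))
        apply this.congr'
        filter_upwards [self_mem_nhdsWithin] with b (hb : b < l)
        simp [slope_def_field, hcl]
      have hb4 : Filter.Tendsto (fun b : ℝ => (b - l) / Real.sin (c * b)) (𝓝[<] l)
          (𝓝 (-c)⁻¹) := by
        have := hb3.inv₀ (by simpa using hcpos.ne')
        apply this.congr
        intro b
        rw [inv_div]
      have hb5 : Filter.Tendsto (fun b : ℝ => Real.cos (c * b)) (𝓝[<] l) (𝓝 (-1)) := by
        have : Filter.Tendsto (fun b : ℝ => Real.cos (c * b)) (𝓝 l) (𝓝 (Real.cos (c * l))) :=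
          (Real.continuous_cos.comp (continuous_const.mul continuous_id)).tendsto l
        rw [hcl, Real.cos_pi] at this
        exact this.mono_left nhdsWithin_le_nhds
      have := ((hb1.mul hb2).const_mul c).mul (hb5.mul hb4)
      have h00 : c * (g' l * 0) * (-1 * (-c)⁻¹) = 0 := by ring
      rw [h00] at this
      apply this.congr'
      filter_upwards [Ioo_mem_nhdsLT_of_mem
        (⟨half_lt_self hl, le_refl l⟩ : l ∈ Set.Ioc (l/2) l)] with b hb
      have hbl : b ∈ Set.Ioo (0:ℝ) l := ⟨(half_pos hl).trans hb.1, hb.2⟩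
      have hbne : b - l ≠ 0 := sub_ne_zero.mpr hbl.2.ne
      have hsne : Real.sin (c * b) ≠ 0 := (hsin b hbl).ne'
      simp only [hB]
      field_simp
    -- combine
    have tLHS : Filter.Tendsto
        (fun q : ℝ × ℝ => (B q.2 - B q.1) + ((∫ x in (0:ℝ)..q.1, h x) + (∫ x in q.2..l, h x)))
        Φ (𝓝 0) := by
      have t1 := (tBl.comp Filter.tendsto_snd).sub (tB0.comp Filter.tendsto_fst)
      have t2 := (tFl.comp Filter.tendsto_fst).add (tFr.comp Filter.tendsto_snd)
      have := t1.add t2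
      simpa using this
    haveI : Filter.NeBot Φ := Filter.prod_neBot.mpr ⟨nhdsGT_neBot 0,
      nhdsLT_neBot l⟩
    exact le_of_tendsto tLHS hev
  -- conclude
  have e1 : IntervalIntegrable (fun x => (g' x)^2) volume 0 l := by
    apply ContinuousOn.intervalIntegrable
    rw [Set.uIcc_of_le hl.le]; exact hg'.pow 2
  have e2 : IntervalIntegrable (fun x => c^2 * (g x)^2) volume 0 l := by
    apply ContinuousOn.intervalIntegrable
    rw [Set.uIcc_of_le hl.le]; exact continuousOn_const.mul (hgc.pow 2)
  have := hmain
  rw [hh, intervalIntegral.integral_sub e1 e2] at this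
  rw [intervalIntegral.integral_const_mul] at this
  linarith [this]

/-- Alikhanov-type inequality for the fractional kernel. -/
lemma alikhanov_ineq (α t : ℝ) (hα0 : 0 < α) (hα1 : α < 1) (ht : 0 < t)
    (v v' : ℝ → ℝ)
    (hv : ∀ s ∈ Set.Icc (0:ℝ) t, HasDerivAt v (v' s) s)
    (hv'c : ContinuousOn v' (Set.Icc 0 t)) :
    (∫ s in (0:ℝ)..t, (t - s) ^ (-α) * (2 * v s * v' s)) ≤
      2 * v t * ∫ s in (0:ℝ)..t, (t - s) ^ (-α) * v' s := by
  have hvc : ContinuousOn v (Set.Icc 0 t) :=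
    fun s hs => (hv s hs).continuousAt.continuousWithinAt
  -- the kernel is interval integrable
  have hK : IntervalIntegrable (fun s => (t - s) ^ (-α)) volume 0 t := by
    have h1 : IntervalIntegrable (fun x : ℝ => x ^ (-α)) volume 0 t :=
      intervalIntegral.intervalIntegrable_rpow' (by linarith)
    have := (h1.comp_sub_left t).symm
    simpa using this
  -- w and its derivative
  set w : ℝ → ℝ := fun s => (v t - v s) ^ 2 with hwdef
  set w' : ℝ → ℝ := fun s => 2 * (v t - v s) * (-(v' s)) with hw'def
  have hw : ∀ s ∈ Set.Icc (0:ℝ) t, HasDerivAt w (w' s) s := by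
    intro s hs
    have := ((hasDerivAt_const s (v t)).sub (hv s hs)).pow 2
    exact this.congr_deriv (by simp only [hw'def]; norm_num)
  have hw'c : ContinuousOn w' (Set.Icc 0 t) :=
    (continuousOn_const.mul (continuousOn_const.sub hvc)).mul hv'c.neg
  have hwc : ContinuousOn w (Set.Icc 0 t) := (continuousOn_const.sub hvc).pow 2
  -- bound on v'
  obtain ⟨M, hM⟩ := (isCompact_Icc).exists_bound_of_continuousOn hv'c
  have hM0 : 0 ≤ M := le_trans (norm_nonneg _) (hM 0 ⟨le_refl 0, ht.le⟩)
  -- central claim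
  have hcentral : (∫ s in (0:ℝ)..t, (t - s) ^ (-α) * w' s) ≤ 0 := by
    -- for t' < t we integrate by parts
    have hstep : ∀ t' ∈ Set.Ioo (0:ℝ) t,
        (∫ s in (0:ℝ)..t', (t - s) ^ (-α) * w' s) ≤ M ^ 2 * (t - t') ^ (2 - α) := by
      intro t' ht'
      have hsub : Set.Icc (0:ℝ) t' ⊆ Set.Icc 0 t :=
        Set.Icc_subset_Icc (le_refl 0) ht'.2.le
      have hpos : ∀ s ∈ Set.Icc (0:ℝ) t', 0 < t - s :=
        fun s hs => sub_pos.mpr (lt_of_le_of_lt hs.2 ht'.2)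
      -- derivative of G s = (t-s)^(-α) * w s
      have hG : ∀ s ∈ Set.Icc (0:ℝ) t',
          HasDerivAt (fun s => (t - s) ^ (-α) * w s)
            (α * (t - s) ^ (-α - 1) * w s + (t - s) ^ (-α) * w' s) s := by
        intro s hs
        have hKd : HasDerivAt (fun s : ℝ => (t - s) ^ (-α)) (α * (t - s) ^ (-α - 1)) s := by
          have hb : HasDerivAt (fun s : ℝ => t - s) (-1) s := by
            exact ((hasDerivAt_const s t).sub (hasDerivAt_id s)).congr_deriv (by simp)
          have := hb.rpow_const (p := -α) (Or.inl (hpos s hs).ne')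
          convert this using 1
          try ring
        have := hKd.mul (hw s (hsub hs))
        exact this
      -- continuity of the pieces on [0,t']
      have hKc : ContinuousOn (fun s : ℝ => (t - s) ^ (-α)) (Set.Icc 0 t') := by
        apply ContinuousOn.rpow_const
        · exact (continuous_const.sub continuous_id).continuousOn
        · exact fun s hs => Or.inl (hpos s hs).ne'
      have hK2c : ContinuousOn (fun s : ℝ => (t - s) ^ (-α - 1)) (Set.Icc 0 t') := by
        apply ContinuousOn.rpow_const
        · exact (continuous_const.sub continuous_id).continuousOn
        · exact fun s hs => Or.inl (hpos s hs).ne'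
      have hint1 : IntervalIntegrable (fun s => α * (t - s) ^ (-α - 1) * w s) volume 0 t' := by
        apply ContinuousOn.intervalIntegrable
        rw [Set.uIcc_of_le ht'.1.le]
        exact (continuousOn_const.mul hK2c).mul (hwc.mono hsub)
      have hint2 : IntervalIntegrable (fun s => (t - s) ^ (-α) * w' s) volume 0 t' := by
        apply ContinuousOn.intervalIntegrable
        rw [Set.uIcc_of_le ht'.1.le]
        exact hKc.mul (hw'c.mono hsub)
      have hftc : (∫ s in (0:ℝ)..t', α * (t - s) ^ (-α - 1) * w s + (t - s) ^ (-α) * w' s)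
          = (t - t') ^ (-α) * w t' - (t - 0) ^ (-α) * w 0 := by
        apply intervalIntegral.integral_eq_sub_of_hasDerivAt
        · intro s hs
          rw [Set.uIcc_of_le ht'.1.le] at hs
          exact hG s hs
        · exact hint1.add hint2
      rw [intervalIntegral.integral_add hint1 hint2] at hftc
      have hnn1 : 0 ≤ ∫ s in (0:ℝ)..t', α * (t - s) ^ (-α - 1) * w s := by
        apply intervalIntegral.integral_nonneg ht'.1.le
        intro s hs
        have := hpos s hs
        positivity
      have hnn2 : 0 ≤ (t - 0) ^ (-α) * w 0 := by
        have : (0:ℝ) < t - 0 := by simpa using ht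
        positivity
      -- bound on w t'
      have hwt' : w t' ≤ (M * (t - t')) ^ 2 := by
        have hdiff : |v t - v t'| ≤ M * |t - t'| := by
          have := Convex.norm_image_sub_le_of_norm_hasDerivWithin_le
            (f := v) (f' := v') (s := Set.Icc (0:ℝ) t)
            (fun s hs => (hv s hs).hasDerivWithinAt) (fun s hs => hM s hs)
            (convex_Icc 0 t) (Set.mem_Icc_of_Ioo ht') ⟨ht.le, le_refl t⟩
          simpa [Real.norm_eq_abs] using this
        have h1 : |v t - v t'| ≤ M * (t - t') := by
          rwa [abs_of_pos (sub_pos.mpr ht'.2)] at hdiff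
        calc w t' = |v t - v t'| ^ 2 := by rw [sq_abs]
          _ ≤ (M * (t - t')) ^ 2 := by
              apply pow_le_pow_left₀ (abs_nonneg _) h1
      have hrpow : (t - t') ^ (-α) * (M * (t - t')) ^ 2 = M ^ 2 * (t - t') ^ (2 - α) := by
        have hp : (0:ℝ) < t - t' := sub_pos.mpr ht'.2
        rw [mul_pow, ← Real.rpow_natCast (t - t') 2]
        rw [show ((2:ℕ) : ℝ) = (2:ℝ) by norm_num]
        rw [show (2:ℝ) - α = -α + 2 by ring, Real.rpow_add hp]
        ring
      have hle : (t - t') ^ (-α) * w t' ≤ M ^ 2 * (t - t') ^ (2 - α) := by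
        rw [← hrpow]
        apply mul_le_mul_of_nonneg_left hwt'
        have hp : (0:ℝ) < t - t' := sub_pos.mpr ht'.2
        positivity
      linarith
    -- pass to the limit t' → t⁻
    have hKw'int : IntervalIntegrable (fun s => (t - s) ^ (-α) * w' s) volume 0 t :=
      hK.mul_continuousOn (by rw [Set.uIcc_of_le ht.le]; exact hw'c)
    have hne : Filter.NeBot (𝓝[Set.Ioo (0:ℝ) t] t) := by
      rw [← mem_closure_iff_nhdsWithin_neBot, closure_Ioo ht.ne]
      exact ⟨ht.le, le_refl t⟩
    have hlim1 : Filter.Tendsto (fun t' => ∫ s in (0:ℝ)..t', (t - s) ^ (-α) * w' s)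
        (𝓝[Set.Ioo (0:ℝ) t] t) (𝓝 (∫ s in (0:ℝ)..t, (t - s) ^ (-α) * w' s)) := by
      have hcont := intervalIntegral.continuousOn_primitive_interval
        (a := 0) (b := t) (μ := volume) (f := fun s => (t - s) ^ (-α) * w' s) ?_
      · have : t ∈ Set.uIcc (0:ℝ) t := by rw [Set.uIcc_of_le ht.le]; exact ⟨ht.le, le_refl t⟩
        have h2 := (hcont t this).tendsto
        apply h2.mono_left
        apply nhdsWithin_mono
        rw [Set.uIcc_of_le ht.le]
        exact Set.Ioo_subset_Icc_self
      · rw [← intervalIntegrable_iff'] 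
        exact hKw'int
    have hlim2 : Filter.Tendsto (fun t' => M ^ 2 * (t - t') ^ (2 - α))
        (𝓝[Set.Ioo (0:ℝ) t] t) (𝓝 0) := by
      have h1 : Filter.Tendsto (fun t' : ℝ => t - t') (𝓝 t) (𝓝 0) := by
        have : Continuous (fun t' : ℝ => t - t') := continuous_const.sub continuous_id
        simpa using this.tendsto t
      have h2 : Filter.Tendsto (fun t' : ℝ => (t - t') ^ (2 - α)) (𝓝 t) (𝓝 0) := by
        have hc := Real.continuousAt_rpow_const 0 (2 - α) (Or.inr (by linarith))
        have := hc.tendsto.comp h1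
        simpa [Function.comp_def, Real.zero_rpow (by linarith : (2:ℝ) - α ≠ 0)] using this
      have h3 := (h2.const_mul (M ^ 2)).mono_left
        (nhdsWithin_le_nhds (s := Set.Ioo (0:ℝ) t))
      simpa using h3
    apply le_of_tendsto_of_tendsto hlim1 hlim2
    filter_upwards [self_mem_nhdsWithin] with t' ht'
    exact hstep t' ht'
  -- conclude by linearity
  have hKv'int : IntervalIntegrable (fun s => (t - s) ^ (-α) * v' s) volume 0 t :=
    hK.mul_continuousOn (by rw [Set.uIcc_of_le ht.le]; exact hv'c)
  have hKvv'int : IntervalIntegrable (fun s => (t - s) ^ (-α) * (2 * v s * v' s)) volume 0 t :=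
    hK.mul_continuousOn (by
      rw [Set.uIcc_of_le ht.le]
      exact (continuousOn_const.mul hvc).mul hv'c)
  have hKw'int : IntervalIntegrable (fun s => (t - s) ^ (-α) * w' s) volume 0 t :=
    hK.mul_continuousOn (by rw [Set.uIcc_of_le ht.le]; exact hw'c)
  have hconst : 2 * v t * (∫ s in (0:ℝ)..t, (t - s) ^ (-α) * v' s)
      = ∫ s in (0:ℝ)..t, 2 * v t * ((t - s) ^ (-α) * v' s) :=
    (intervalIntegral.integral_const_mul _ _).symm
  have hsplit : (∫ s in (0:ℝ)..t, 2 * v t * ((t - s) ^ (-α) * v' s))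
      - (∫ s in (0:ℝ)..t, (t - s) ^ (-α) * (2 * v s * v' s))
      = ∫ s in (0:ℝ)..t, -((t - s) ^ (-α) * w' s) := by
    rw [← intervalIntegral.integral_sub (hKv'int.const_mul _) hKvv'int]
    apply intervalIntegral.integral_congr
    intro s _
    simp only [hw'def]
    ring
  have : (0:ℝ) ≤ ∫ s in (0:ℝ)..t, -((t - s) ^ (-α) * w' s) := by
    rw [intervalIntegral.integral_neg]
    linarith
  linarith [hconst, hsplit, this]

set_option maxHeartbeats 1600000 in
/-- Fractional energy inequality: for a solution `u` of
`∂_t^α u − u_xx + p(t) u = f` with homogeneous Dirichlet boundary conditions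
and `p ≥ 0`, for every `t ∈ (0,T]`,
`(1/Γ(1−α)) ∫₀ᵗ (t−s)^{−α} (d/ds ∫₀ˡ u(x,s)² dx) ds ≤ (l²/(2π²)) ∫₀ˡ f(x,t)² dx`. -/
theorem fractional_energy_inequality (α l T : ℝ) (hα0 : 0 < α) (hα1 : α < 1)
    (hl : 0 < l) (hT : 0 < T)
    (p : ℝ → ℝ) (f : ℝ → ℝ → ℝ)
    (u ut ux uxx : ℝ → ℝ → ℝ)
    (hp_cont : ContinuousOn p (Set.Icc 0 T))
    (hp_nonneg : ∀ t ∈ Set.Icc (0:ℝ) T, 0 ≤ p t)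
    (hf_cont : ContinuousOn (fun q : ℝ × ℝ => f q.1 q.2)
      (Set.Icc 0 l ×ˢ Set.Icc 0 T))
    (hu_cont : ContinuousOn (fun q : ℝ × ℝ => u q.1 q.2)
      (Set.Icc 0 l ×ˢ Set.Icc 0 T))
    (hut_cont : ContinuousOn (fun q : ℝ × ℝ => ut q.1 q.2)
      (Set.Icc 0 l ×ˢ Set.Icc 0 T))
    (hux_cont : ContinuousOn (fun q : ℝ × ℝ => ux q.1 q.2)
      (Set.Icc 0 l ×ˢ Set.Icc 0 T))
    (huxx_cont : ContinuousOn (fun q : ℝ × ℝ => uxx q.1 q.2)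
      (Set.Icc 0 l ×ˢ Set.Icc 0 T))
    (hut : ∀ x ∈ Set.Icc (0:ℝ) l, ∀ s ∈ Set.Icc (0:ℝ) T,
      HasDerivAt (fun τ => u x τ) (ut x s) s)
    (hux : ∀ t ∈ Set.Icc (0:ℝ) T, ∀ x ∈ Set.Icc (0:ℝ) l,
      HasDerivAt (fun y => u y t) (ux x t) x)
    (huxx : ∀ t ∈ Set.Icc (0:ℝ) T, ∀ x ∈ Set.Icc (0:ℝ) l,
      HasDerivAt (fun y => ux y t) (uxx x t) x)
    (hPDE : ∀ x ∈ Set.Ioo (0:ℝ) l, ∀ t ∈ Set.Ioc (0:ℝ) T,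
      (1 / Real.Gamma (1 - α)) * (∫ s in (0:ℝ)..t, (t - s) ^ (-α) * ut x s)
        - uxx x t + p t * u x t = f x t)
    (hBC : ∀ t ∈ Set.Icc (0:ℝ) T, u 0 t = 0 ∧ u l t = 0) :
    ∀ t ∈ Set.Ioc (0:ℝ) T,
      (1 / Real.Gamma (1 - α)) *
          (∫ s in (0:ℝ)..t, (t - s) ^ (-α) *
            deriv (fun τ => ∫ x in (0:ℝ)..l, (u x τ) ^ 2) s) ≤
        (l ^ 2 / (2 * Real.pi ^ 2)) * ∫ x in (0:ℝ)..l, (f x t) ^ 2 := by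
  intro t ht
  have htT : t ≤ T := ht.2
  have ht0 : 0 < t := ht.1
  have hΓ : 0 < Real.Gamma (1 - α) := Real.Gamma_pos_of_pos (by linarith)
  -- slice continuity helpers
  have hslice_x : ∀ (v : ℝ → ℝ → ℝ), ContinuousOn (fun q : ℝ × ℝ => v q.1 q.2)
      (Set.Icc 0 l ×ˢ Set.Icc 0 T) → ∀ s ∈ Set.Icc (0:ℝ) T,
      ContinuousOn (fun x => v x s) (Set.Icc 0 l) := by
    intro v hv s hs
    have : ContinuousOn (fun x : ℝ => ((x, s) : ℝ × ℝ)) (Set.Icc 0 l) :=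
      (continuous_id.prodMk continuous_const).continuousOn
    exact hv.comp this (fun x hx => ⟨hx, hs⟩)
  have hslice_t : ∀ (v : ℝ → ℝ → ℝ), ContinuousOn (fun q : ℝ × ℝ => v q.1 q.2)
      (Set.Icc 0 l ×ˢ Set.Icc 0 T) → ∀ x ∈ Set.Icc (0:ℝ) l,
      ContinuousOn (fun s => v x s) (Set.Icc 0 T) := by
    intro v hv x hx
    have : ContinuousOn (fun s : ℝ => ((x, s) : ℝ × ℝ)) (Set.Icc 0 T) :=
      (continuous_const.prodMk continuous_id).continuousOn
    exact hv.comp this (fun s hs => ⟨hx, hs⟩)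
  -- global bounds
  obtain ⟨Cu, hCu⟩ := ((isCompact_Icc).prod isCompact_Icc).exists_bound_of_continuousOn hu_cont
  obtain ⟨Cut, hCut⟩ := ((isCompact_Icc).prod isCompact_Icc).exists_bound_of_continuousOn hut_cont
  have hCu0 : 0 ≤ Cu := le_trans (norm_nonneg _) (hCu (0, 0) ⟨⟨le_refl 0, hl.le⟩, ⟨le_refl 0, hT.le⟩⟩)
  have hCut0 : 0 ≤ Cut := le_trans (norm_nonneg _) (hCut (0, 0) ⟨⟨le_refl 0, hl.le⟩, ⟨le_refl 0, hT.le⟩⟩)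
  -- Step 1: derivative of the energy
  set D : ℝ → ℝ := fun s => ∫ x in (0:ℝ)..l, 2 * u x s * ut x s with hD
  have hE : ∀ s ∈ Set.Ioo (0:ℝ) T,
      HasDerivAt (fun τ => ∫ x in (0:ℝ)..l, (u x τ) ^ 2) (D s) s := by
    intro s hs
    set ε : ℝ := min s (T - s) with hε
    have hε0 : 0 < ε := lt_min hs.1 (sub_pos.mpr hs.2)
    have hball : Metric.ball s ε ⊆ Set.Icc 0 T := by
      intro τ hτ
      rw [Metric.mem_ball, Real.dist_eq, abs_lt] at hτ
      constructor
      · have := hτ.1; have : -(min s (T-s)) < τ - s := this; have h2 := min_le_left s (T-s); linarith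
      · have := hτ.2; have h2 := min_le_right s (T-s); linarith
    have hmeas : ∀ τ ∈ Set.Icc (0:ℝ) T, AEStronglyMeasurable (fun x => (u x τ)^2)
        (MeasureTheory.volume.restrict (Set.uIoc (0:ℝ) l)) := by
      intro τ hτ
      rw [Set.uIoc_of_le hl.le]
      apply ContinuousOn.aestronglyMeasurable _ measurableSet_Ioc
      exact (((hslice_x u hu_cont τ hτ).mono Set.Ioc_subset_Icc_self).pow 2)
    have key := intervalIntegral.hasDerivAt_integral_of_dominated_loc_of_deriv_le
      (F := fun τ x => (u x τ)^2) (F' := fun τ x => 2 * u x τ * ut x τ)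
      (x₀ := s) (a := 0) (b := l) (μ := MeasureTheory.volume)
      (bound := fun _ => 2 * Cu * Cut) (Metric.ball_mem_nhds s hε0) ?_ ?_ ?_ ?_ ?_ ?_
    · exact key.2
    · filter_upwards [Filter.mem_of_superset (Metric.ball_mem_nhds s hε0) hball] with τ hτ
      exact hmeas τ hτ
    · apply ContinuousOn.intervalIntegrable
      rw [Set.uIcc_of_le hl.le]
      exact ((hslice_x u hu_cont s (Set.mem_Icc_of_Ioo hs)).pow 2)
    · rw [Set.uIoc_of_le hl.le]
      apply ContinuousOn.aestronglyMeasurable _ measurableSet_Ioc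
      apply ContinuousOn.mono _ Set.Ioc_subset_Icc_self
      exact (continuousOn_const.mul (hslice_x u hu_cont s (Set.mem_Icc_of_Ioo hs))).mul
        (hslice_x ut hut_cont s (Set.mem_Icc_of_Ioo hs))
    · apply MeasureTheory.ae_of_all
      intro x hx τ hτ
      rw [Set.uIoc_of_le hl.le] at hx
      have hxl : x ∈ Set.Icc (0:ℝ) l := Set.Ioc_subset_Icc_self hx
      have hq : ((x, τ) : ℝ × ℝ) ∈ Set.Icc (0:ℝ) l ×ˢ Set.Icc (0:ℝ) T := ⟨hxl, hball hτ⟩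
      have h1 := hCu (x, τ) hq
      have h2 := hCut (x, τ) hq
      simp only [Real.norm_eq_abs] at h1 h2 ⊢
      rw [abs_mul, abs_mul, abs_two]
      calc 2 * |u x τ| * |ut x τ| ≤ 2 * Cu * |ut x τ| := by
            apply mul_le_mul_of_nonneg_right _ (abs_nonneg _)
            apply mul_le_mul_of_nonneg_left h1 (by norm_num)
        _ ≤ 2 * Cu * Cut := by
            apply mul_le_mul_of_nonneg_left h2 (by positivity)
    · exact intervalIntegrable_const
    · apply MeasureTheory.ae_of_all
      intro x hx τ hτ
      rw [Set.uIoc_of_le hl.le] at hx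
      have hxl : x ∈ Set.Icc (0:ℝ) l := Set.Ioc_subset_Icc_self hx
      have := (hut x hxl τ (hball hτ)).pow 2
      exact this.congr_deriv (by norm_num [mul_comm, mul_assoc, mul_left_comm])
  -- Step 2: replace deriv by D a.e.
  set K : ℝ → ℝ := fun s => (t - s) ^ (-α) with hKdef
  have hKint : IntervalIntegrable K MeasureTheory.volume 0 t := by
    have h1 : IntervalIntegrable (fun x : ℝ => x ^ (-α)) MeasureTheory.volume 0 t :=
      intervalIntegral.intervalIntegrable_rpow' (by linarith)
    have := (h1.comp_sub_left t).symm
    simpa using this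
  have hne_t : ∀ᵐ s : ℝ, s ≠ t := by
    rw [MeasureTheory.ae_iff]
    have : {a : ℝ | ¬ a ≠ t} = {t} := by ext a; simp
    rw [this]
    exact MeasureTheory.measure_singleton t
  have hcongr : (∫ s in (0:ℝ)..t, K s * deriv (fun τ => ∫ x in (0:ℝ)..l, (u x τ) ^ 2) s)
      = ∫ s in (0:ℝ)..t, K s * D s := by
    apply intervalIntegral.integral_congr_ae
    filter_upwards [hne_t] with s hs hmem
    rw [Set.uIoc_of_le ht0.le] at hmem
    have hsT : s ∈ Set.Ioo (0:ℝ) T := ⟨hmem.1, lt_of_lt_of_le (lt_of_le_of_ne hmem.2 hs) htT⟩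
    rw [(hE s hsT).deriv]
  -- Step 3: Fubini
  set μt := MeasureTheory.volume.restrict (Set.Ioc (0:ℝ) t) with hμt
  set νl := MeasureTheory.volume.restrict (Set.Ioc (0:ℝ) l) with hνl
  have hsubT : Set.Ioc (0:ℝ) t ⊆ Set.Icc (0:ℝ) T := fun s hs => ⟨hs.1.le, hs.2.trans htT⟩
  have hsubl : Set.Ioc (0:ℝ) l ⊆ Set.Icc (0:ℝ) l := Set.Ioc_subset_Icc_self
  have hHcont : ContinuousOn (fun q : ℝ × ℝ => 2 * u q.2 q.1 * ut q.2 q.1)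
      (Set.Ioc (0:ℝ) t ×ˢ Set.Ioc (0:ℝ) l) := by
    have hswap : ContinuousOn (fun q : ℝ × ℝ => ((q.2, q.1) : ℝ × ℝ))
        (Set.Ioc (0:ℝ) t ×ˢ Set.Ioc (0:ℝ) l) :=
      (continuous_snd.prodMk continuous_fst).continuousOn
    have hmapsto : ∀ q ∈ Set.Ioc (0:ℝ) t ×ˢ Set.Ioc (0:ℝ) l,
        ((q.2, q.1) : ℝ × ℝ) ∈ Set.Icc (0:ℝ) l ×ˢ Set.Icc (0:ℝ) T :=
      fun q hq => ⟨hsubl hq.2, hsubT hq.1⟩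
    exact (continuousOn_const.mul (hu_cont.comp hswap hmapsto)).mul
      (hut_cont.comp hswap hmapsto)
  have hHmeas : MeasureTheory.AEStronglyMeasurable
      (fun q : ℝ × ℝ => K q.1 * (2 * u q.2 q.1 * ut q.2 q.1)) (μt.prod νl) := by
    rw [hμt, hνl, MeasureTheory.Measure.prod_restrict]
    apply MeasureTheory.AEStronglyMeasurable.mul
    · have : Measurable (fun q : ℝ × ℝ => (t - q.1) ^ (-α)) := by fun_prop
      exact this.aestronglyMeasurable
    · exact hHcont.aestronglyMeasurable (measurableSet_Ioc.prod measurableSet_Ioc)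
  have hKIoc : MeasureTheory.IntegrableOn K (Set.Ioc (0:ℝ) t) :=
    (intervalIntegrable_iff_integrableOn_Ioc_of_le ht0.le).mp hKint
  have hHint : MeasureTheory.Integrable
      (fun q : ℝ × ℝ => K q.1 * (2 * u q.2 q.1 * ut q.2 q.1)) (μt.prod νl) := by
    apply MeasureTheory.Integrable.mono'
      (g := fun q : ℝ × ℝ => |K q.1| * (2 * Cu * Cut)) _ hHmeas
    · have hae : ∀ᵐ q ∂(μt.prod νl), q ∈ Set.Ioc (0:ℝ) t ×ˢ Set.Ioc (0:ℝ) l := by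
        rw [hμt, hνl, MeasureTheory.Measure.prod_restrict]
        exact MeasureTheory.ae_restrict_mem (measurableSet_Ioc.prod measurableSet_Ioc)
      filter_upwards [hae] with q hq
      have hqmem : ((q.2, q.1) : ℝ × ℝ) ∈ Set.Icc (0:ℝ) l ×ˢ Set.Icc (0:ℝ) T :=
        ⟨hsubl hq.2, hsubT hq.1⟩
      have h1 := hCu (q.2, q.1) hqmem
      have h2 := hCut (q.2, q.1) hqmem
      simp only [Real.norm_eq_abs] at h1 h2 ⊢
      rw [abs_mul]
      apply mul_le_mul_of_nonneg_left _ (abs_nonneg _)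
      rw [abs_mul, abs_mul, abs_two]
      calc 2 * |u q.2 q.1| * |ut q.2 q.1| ≤ 2 * Cu * |ut q.2 q.1| := by
            apply mul_le_mul_of_nonneg_right _ (abs_nonneg _)
            apply mul_le_mul_of_nonneg_left h1 (by norm_num)
        _ ≤ 2 * Cu * Cut := mul_le_mul_of_nonneg_left h2 (by positivity)
    · exact (hKIoc.abs).mul_prod
        (MeasureTheory.integrableOn_const measure_Ioc_lt_top.ne)
  -- Fubini
  have hfub : (∫ s in (0:ℝ)..t, K s * D s)
      = ∫ x in (0:ℝ)..l, ∫ s in (0:ℝ)..t, K s * (2 * u x s * ut x s) := by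
    have h1 : ∀ s ∈ Set.uIcc (0:ℝ) t, K s * D s
        = ∫ x in (0:ℝ)..l, K s * (2 * u x s * ut x s) := by
      intro s _
      rw [hD]
      exact (intervalIntegral.integral_const_mul _ _).symm
    rw [intervalIntegral.integral_congr h1]
    simp only [intervalIntegral.integral_of_le ht0.le, intervalIntegral.integral_of_le hl.le]
    exact MeasureTheory.integral_integral_swap hHint
  -- Step 4: Alikhanov + PDE pointwise in x
  set ψ : ℝ → ℝ := fun x => 2 * u x t * (f x t + uxx x t - p t * u x t) with hψ
  have htIcc : t ∈ Set.Icc (0:ℝ) T := ⟨ht0.le, htT⟩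
  have hAli : ∀ x ∈ Set.Ioo (0:ℝ) l,
      (∫ s in (0:ℝ)..t, K s * (2 * u x s * ut x s)) ≤ Real.Gamma (1 - α) * ψ x := by
    intro x hx
    have hxIcc : x ∈ Set.Icc (0:ℝ) l := Set.mem_Icc_of_Ioo hx
    have hv : ∀ s ∈ Set.Icc (0:ℝ) t, HasDerivAt (fun s => u x s) (ut x s) s :=
      fun s hs => hut x hxIcc s ⟨hs.1, hs.2.trans htT⟩
    have hv'c : ContinuousOn (fun s => ut x s) (Set.Icc 0 t) :=
      (hslice_t ut hut_cont x hxIcc).mono (Set.Icc_subset_Icc (le_refl 0) htT)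
    have h1 := alikhanov_ineq α t hα0 hα1 ht0 (fun s => u x s) (fun s => ut x s) hv hv'c
    have h2 := hPDE x hx t ht
    have h3 : (∫ s in (0:ℝ)..t, K s * ut x s)
        = Real.Gamma (1 - α) * (f x t + uxx x t - p t * u x t) := by
      field_simp at h2
      linarith
    calc (∫ s in (0:ℝ)..t, K s * (2 * u x s * ut x s))
        ≤ 2 * u x t * ∫ s in (0:ℝ)..t, K s * ut x s := h1
      _ = Real.Gamma (1 - α) * ψ x := by rw [h3, hψ]; ring
  -- Step 5: integrate the bound in x
  have hψcont : ContinuousOn ψ (Set.Icc 0 l) := by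
    have c1 := hslice_x u hu_cont t htIcc
    have c2 := hslice_x f hf_cont t htIcc
    have c3 := hslice_x uxx huxx_cont t htIcc
    exact (continuousOn_const.mul c1).mul ((c2.add c3).sub (continuousOn_const.mul c1))
  have hInnerInt : MeasureTheory.IntegrableOn
      (fun x => ∫ s in (0:ℝ)..t, K s * (2 * u x s * ut x s)) (Set.Ioc (0:ℝ) l) := by
    have := hHint.integral_prod_right
    apply this.congr
    apply MeasureTheory.ae_of_all
    intro x
    exact (intervalIntegral.integral_of_le ht0.le).symm
  have hψInt : MeasureTheory.IntegrableOn (fun x => Real.Gamma (1 - α) * ψ x)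
      (Set.Ioc (0:ℝ) l) :=
    ((continuousOn_const.mul hψcont).integrableOn_compact isCompact_Icc).mono_set hsubl
  have hmono : (∫ x in (0:ℝ)..l, ∫ s in (0:ℝ)..t, K s * (2 * u x s * ut x s))
      ≤ ∫ x in (0:ℝ)..l, Real.Gamma (1 - α) * ψ x := by
    rw [intervalIntegral.integral_of_le hl.le, intervalIntegral.integral_of_le hl.le]
    have hne_l : ∀ᵐ x : ℝ, x ≠ l := by
      rw [MeasureTheory.ae_iff]
      have : {a : ℝ | ¬ a ≠ l} = {l} := by ext a; simp
      rw [this]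
      exact MeasureTheory.measure_singleton l
    apply MeasureTheory.setIntegral_mono_on_ae hInnerInt hψInt measurableSet_Ioc
    filter_upwards [hne_l] with x hxl hx
    exact hAli x ⟨hx.1, lt_of_le_of_ne hx.2 hxl⟩
  -- Step 6: spatial estimates at time t
  have cU := hslice_x u hu_cont t htIcc
  have cF := hslice_x f hf_cont t htIcc
  have cUx := hslice_x ux hux_cont t htIcc
  have cUxx := hslice_x uxx huxx_cont t htIcc
  have mk : ∀ {φ : ℝ → ℝ}, ContinuousOn φ (Set.Icc 0 l) →
      IntervalIntegrable φ MeasureTheory.volume 0 l := by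
    intro φ hφ
    apply ContinuousOn.intervalIntegrable
    rwa [Set.uIcc_of_le hl.le]
  have hbc := hBC t htIcc
  -- integration by parts for u * uxx
  have hftc : (∫ x in (0:ℝ)..l, ((ux x t)^2 + u x t * uxx x t))
      = u l t * ux l t - u 0 t * ux 0 t := by
    apply intervalIntegral.integral_eq_sub_of_hasDerivAt
    · intro x hx
      rw [Set.uIcc_of_le hl.le] at hx
      have := (hux t htIcc x hx).mul (huxx t htIcc x hx)
      exact this.congr_deriv (by ring)
    · exact mk ((cUx.pow 2).add (cU.mul cUxx))
  rw [hbc.1, hbc.2] at hftc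
  simp only [zero_mul, sub_zero, sub_self] at hftc
  have hsplit2 : (∫ x in (0:ℝ)..l, ((ux x t)^2 + u x t * uxx x t))
      = (∫ x in (0:ℝ)..l, (ux x t)^2) + ∫ x in (0:ℝ)..l, u x t * uxx x t :=
    intervalIntegral.integral_add (mk (cUx.pow 2)) (mk (cU.mul cUxx))
  have hA2 : (∫ x in (0:ℝ)..l, u x t * uxx x t) = - ∫ x in (0:ℝ)..l, (ux x t)^2 := by
    rw [hsplit2] at hftc
    linarith
  -- Wirtinger
  have hW := wirtinger_ineq l hl (fun y => u y t) (fun y => ux y t)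
    (fun x hx => hux t htIcc x hx) cUx hbc.1 hbc.2
  -- Young inequality, integrated
  set ε : ℝ := 2 * (Real.pi / l)^2 with hεdef
  have hε0 : 0 < ε := by positivity
  have hεinv : ε * (l^2/(2*Real.pi^2)) = 1 := by
    rw [hεdef]
    field_simp
  have hY : ∀ x ∈ Set.Icc (0:ℝ) l,
      2 * u x t * f x t ≤ ε * (u x t)^2 + (l^2/(2*Real.pi^2)) * (f x t)^2 := by
    intro x _
    nlinarith [sq_nonneg (ε * u x t - f x t), hε0, hεinv, sq_nonneg (f x t),
      sq_nonneg (u x t), sq_nonneg (ε * u x t + f x t)]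
  have hYint : (∫ x in (0:ℝ)..l, 2 * u x t * f x t)
      ≤ ε * (∫ x in (0:ℝ)..l, (u x t)^2)
        + (l^2/(2*Real.pi^2)) * ∫ x in (0:ℝ)..l, (f x t)^2 := by
    have h1 := intervalIntegral.integral_mono_on hl.le
      (mk (φ := fun x => 2 * u x t * f x t) ((continuousOn_const.mul cU).mul cF))
      (mk (φ := fun x => ε * (u x t)^2 + (l^2/(2*Real.pi^2)) * (f x t)^2) ((continuousOn_const.mul (cU.pow 2)).add
        (continuousOn_const.mul (cF.pow 2)))) hY
    rwa [intervalIntegral.integral_add (mk (φ := fun x => ε * (u x t)^2) (continuousOn_const.mul (cU.pow 2)))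
      (mk (φ := fun x => (l^2/(2*Real.pi^2)) * (f x t)^2) (continuousOn_const.mul (cF.pow 2))), intervalIntegral.integral_const_mul,
      intervalIntegral.integral_const_mul] at h1
  -- decompose ψ
  have hψsplit : (∫ x in (0:ℝ)..l, ψ x)
      = (∫ x in (0:ℝ)..l, 2 * u x t * f x t)
        + 2 * (∫ x in (0:ℝ)..l, u x t * uxx x t)
        - (2 * p t) * ∫ x in (0:ℝ)..l, (u x t)^2 := by
    have h1 : ∀ x ∈ Set.uIcc (0:ℝ) l, ψ x
        = (2 * u x t * f x t + 2 * (u x t * uxx x t)) - (2 * p t) * (u x t)^2 := by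
      intro x _
      rw [hψ]
      ring
    rw [intervalIntegral.integral_congr h1,
      intervalIntegral.integral_sub
        ((mk (φ := fun x => 2 * u x t * f x t) ((continuousOn_const.mul cU).mul cF)).add
          ((mk (φ := fun x => u x t * uxx x t) (cU.mul cUxx)).const_mul 2))
        ((mk (φ := fun x => (u x t)^2) (cU.pow 2)).const_mul (2 * p t)),
      intervalIntegral.integral_add (mk (φ := fun x => 2 * u x t * f x t) ((continuousOn_const.mul cU).mul cF))
        ((mk (φ := fun x => u x t * uxx x t) (cU.mul cUxx)).const_mul 2),
      intervalIntegral.integral_const_mul, intervalIntegral.integral_const_mul]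
  have hpt : 0 ≤ p t := hp_nonneg t htIcc
  have hU2 : 0 ≤ ∫ x in (0:ℝ)..l, (u x t)^2 :=
    intervalIntegral.integral_nonneg hl.le (fun x _ => sq_nonneg _)
  have hψle : (∫ x in (0:ℝ)..l, ψ x)
      ≤ (l^2/(2*Real.pi^2)) * ∫ x in (0:ℝ)..l, (f x t)^2 := by
    have hWir2 : ε * (∫ x in (0:ℝ)..l, (u x t)^2) ≤ 2 * ∫ x in (0:ℝ)..l, (ux x t)^2 := by
      rw [hεdef]
      linarith [hW]
    have h5 : 0 ≤ 2 * p t * ∫ x in (0:ℝ)..l, (u x t)^2 := by positivity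
    rw [hψsplit, hA2]
    linarith
  -- Step 7: glue everything
  have hΓψ : (∫ x in (0:ℝ)..l, Real.Gamma (1 - α) * ψ x)
      = Real.Gamma (1 - α) * ∫ x in (0:ℝ)..l, ψ x :=
    intervalIntegral.integral_const_mul _ _
  have hchain : (∫ s in (0:ℝ)..t, K s * deriv (fun τ => ∫ x in (0:ℝ)..l, (u x τ) ^ 2) s)
      ≤ Real.Gamma (1 - α) * ((l^2/(2*Real.pi^2)) * ∫ x in (0:ℝ)..l, (f x t)^2) := by
    rw [hcongr, hfub]
    calc (∫ x in (0:ℝ)..l, ∫ s in (0:ℝ)..t, K s * (2 * u x s * ut x s))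
        ≤ ∫ x in (0:ℝ)..l, Real.Gamma (1 - α) * ψ x := hmono
      _ = Real.Gamma (1 - α) * ∫ x in (0:ℝ)..l, ψ x := hΓψ
      _ ≤ _ := mul_le_mul_of_nonneg_left hψle hΓ.le
  have hfinal := mul_le_mul_of_nonneg_left hchain
    (le_of_lt (by positivity : (0:ℝ) < 1 / Real.Gamma (1 - α)))
  calc (1 / Real.Gamma (1 - α)) *
        (∫ s in (0:ℝ)..t, (t - s) ^ (-α) * deriv (fun τ => ∫ x in (0:ℝ)..l, (u x τ) ^ 2) s)
      ≤ (1 / Real.Gamma (1 - α)) * (Real.Gamma (1 - α)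
          * ((l^2/(2*Real.pi^2)) * ∫ x in (0:ℝ)..l, (f x t)^2)) := hfinal
    _ = (l ^ 2 / (2 * Real.pi ^ 2)) * ∫ x in (0:ℝ)..l, (f x t) ^ 2 := by
        rw [← mul_assoc, one_div_mul_cancel hΓ.ne', one_mul]
end

section
/- Let 0<α<1, k≥2, and let 0=t₀<t₁<⋯<t_k be real numbers. Define d_j = ((t_k−t_{j−1})^{1−α} − (t_k−t_j)^{1−α})/(t_j−t_{j−1}) for 1≤j≤k. Then d_j ≤ d_{j+1} for all 1≤j≤k−1; i.e., the L1 weights are nondecreasing in j. -/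
private lemma concave_aux (α T : ℝ) (hα0 : 0 < α) (hα1 : α < 1) :
    ConcaveOn ℝ (Set.Iic T) (fun x => (T - x) ^ (1 - α)) := by
  have hg : ConcaveOn ℝ (Set.Ici (0:ℝ)) (fun x : ℝ => x ^ (1 - α)) :=
    Real.concaveOn_rpow (by linarith) (by linarith)
  refine ⟨convex_Iic T, ?_⟩
  intro x hx y hy a b ha hb hab
  have hx' : T - x ∈ Set.Ici (0:ℝ) := by simp at hx ⊢; linarith
  have hy' : T - y ∈ Set.Ici (0:ℝ) := by simp at hy ⊢; linarith
  have h2 := hg.2 hx' hy' ha hb hab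
  simp only [smul_eq_mul] at h2 ⊢
  have heq : T - (a * x + b * y) = a * (T - x) + b * (T - y) := by
    linear_combination (-T) * hab
  rw [heq]; exact h2

/-- Monotonicity of the nonuniform L1 weights: for `0 < α < 1`, `k ≥ 2` and mesh
points `0 = t₀ < t₁ < ⋯ < t_k`, the weights
`d_j = ((t_k − t_{j−1})^{1−α} − (t_k − t_j)^{1−α})/(t_j − t_{j−1})`
satisfy `d_j ≤ d_{j+1}` for `1 ≤ j ≤ k−1`. -/
theorem L1_weights_monotone (α : ℝ) (hα0 : 0 < α) (hα1 : α < 1)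
    (k : ℕ) (hk : 2 ≤ k) (t : ℕ → ℝ) (ht0 : t 0 = 0)
    (hmono : ∀ j, j < k → t j < t (j + 1))
    (d : ℕ → ℝ)
    (hd : ∀ j, 1 ≤ j → j ≤ k →
      d j = ((t k - t (j - 1)) ^ (1 - α) - (t k - t j) ^ (1 - α)) /
        (t j - t (j - 1))) :
    ∀ j, 1 ≤ j → j ≤ k - 1 → d j ≤ d (j + 1) := by
  -- monotonicity of t up to k
  have hle : ∀ i j : ℕ, i ≤ j → j ≤ k → t i ≤ t j := by
    intro i j hij hjk
    induction j with
    | zero => simp [Nat.le_zero.mp hij]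
    | succ n ih =>
      rcases Nat.lt_succ_iff_lt_or_eq.mp (Nat.lt_succ_of_le hij) with h | h
      · have : t i ≤ t n := ih (Nat.lt_succ_iff.mp h) (by omega)
        exact le_trans this (le_of_lt (hmono n (Nat.lt_of_succ_le hjk)))
      · rw [h]
  intro j hj1 hjk1
  have hjk : j + 1 ≤ k := by omega
  have hjltk : j < k := by omega
  set f : ℝ → ℝ := fun x => (t k - x) ^ (1 - α) with hf
  have hconc := concave_aux α (t k) hα0 hα1
  have ha : t (j - 1) ∈ Set.Iic (t k) := hle (j - 1) k (by omega) le_rfl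
  have hc : t (j + 1) ∈ Set.Iic (t k) := hle (j + 1) k hjk le_rfl
  have hab : t (j - 1) < t j := by
    have := hmono (j - 1) (by omega)
    rwa [Nat.sub_add_cancel hj1] at this
  have hbc : t j < t (j + 1) := hmono j hjltk
  have hslope := hconc.slope_anti_adjacent ha hc hab hbc
  have hdj := hd j hj1 (by omega)
  have hdj1 := hd (j + 1) (by omega) hjk
  simp only [Nat.add_sub_cancel] at hdj1
  rw [hdj, hdj1]
  have h1 : (t k - t (j - 1)) ^ (1 - α) - (t k - t j) ^ (1 - α) =
      -(f (t j) - f (t (j - 1))) := by simp only [hf]; ring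
  have h2 : (t k - t j) ^ (1 - α) - (t k - t (j + 1)) ^ (1 - α) =
      -(f (t (j + 1)) - f (t j)) := by simp only [hf]; ring
  rw [h1, h2, neg_div, neg_div, neg_le_neg_iff]
  exact hslope
end

section
/- Let 0<α<1, l>0, T>0, integers N≥2 and M≥1, h = l/N, and a time mesh 0 = t₀ < t₁ < ⋯ < t_M ≤ T. Define the L1 weights d_{k,j} = ((t_k−t_{j−1})^{1−α} − (t_k−t_j)^{1−α})/(t_j−t_{j−1}). Let p^k ≥ 0 for all k, and let real numbers u_i^k (0≤i≤N, 0≤k≤M) satisfy: u_i^0 = φ_i for all i; u_0^k = u_N^k = 0 for all k; and for all 1≤i≤N−1, 1≤k≤M: (1/Γ(2−α)) Σ_{j=1}^{k} d_{k,j}(u_i^j − u_i^{j−1}) − (u_{i+1}^k − 2u_i^k + u_{i−1}^k)/h² + p^k u_i^k = f_i^k. Then for every 1≤k≤M: max_{0≤i≤N} |u_i^k| ≤ max_{0≤i≤N} |φ_i| + T^α Γ(1−α) · max_{1≤m≤k} max_{0≤i≤N} |f_i^m|. -/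
private lemma abel_sum_aux (d v : ℕ → ℝ) : ∀ k : ℕ,
    ∑ i ∈ Finset.range (k + 1), d (i + 1) * (v (i + 1) - v i) =
      d (k + 1) * v (k + 1) - d 1 * v 0 -
        ∑ i ∈ Finset.range k, (d (i + 2) - d (i + 1)) * v (i + 1)
  | 0 => by simp; ring
  | (k + 1) => by
    rw [Finset.sum_range_succ, abel_sum_aux d v k, Finset.sum_range_succ]
    ring

/-- Unconditional maximum-norm stability of the fully implicit L1
finite-difference scheme for `∂_t^α u − u_xx + p(t)u = f` with homogeneous
Dirichlet boundary conditions on a (possibly graded) time mesh: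
`‖u^k‖_∞ ≤ ‖φ‖_∞ + T^α Γ(1−α) max_{1≤m≤k} ‖f^m‖_∞`. -/
theorem L1_scheme_stability (α l T : ℝ) (hα0 : 0 < α) (hα1 : α < 1)
    (hl : 0 < l) (hT : 0 < T) (N M : ℕ) (hN : 2 ≤ N) (hM : 1 ≤ M)
    (h : ℝ) (hh : h = l / N)
    (t : ℕ → ℝ) (ht0 : t 0 = 0) (htmono : ∀ k, k < M → t k < t (k + 1))
    (htT : t M ≤ T)
    (d : ℕ → ℕ → ℝ)
    (hd : ∀ k j : ℕ, 1 ≤ j → j ≤ k → k ≤ M →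
      d k j = ((t k - t (j - 1)) ^ (1 - α) - (t k - t j) ^ (1 - α)) /
        (t j - t (j - 1)))
    (p : ℕ → ℝ) (hp : ∀ k ≤ M, 0 ≤ p k)
    (φ : ℕ → ℝ) (f : ℕ → ℕ → ℝ) (u : ℕ → ℕ → ℝ)
    (hIC : ∀ i ≤ N, u i 0 = φ i)
    (hBC : ∀ k ≤ M, u 0 k = 0 ∧ u N k = 0)
    (hscheme : ∀ i, 1 ≤ i → i ≤ N - 1 → ∀ k, 1 ≤ k → k ≤ M →
      (1 / Real.Gamma (2 - α)) *
          (∑ j ∈ Finset.Icc 1 k, d k j * (u i j - u i (j - 1)))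
        - (u (i + 1) k - 2 * u i k + u (i - 1) k) / h ^ 2
        + p k * u i k = f i k) :
    ∀ k, 1 ≤ k → k ≤ M → ∀ i ≤ N,
      |u i k| ≤ (⨆ i' : Fin (N + 1), |φ (i' : ℕ)|) +
        T ^ α * Real.Gamma (1 - α) *
          ⨆ m : Fin k, ⨆ i' : Fin (N + 1), |f (i' : ℕ) ((m : ℕ) + 1)| := by
  -- Notation
  set Φ : ℝ := ⨆ i' : Fin (N + 1), |φ (i' : ℕ)| with hΦdef
  set C : ℝ := T ^ α * Real.Gamma (1 - α) with hCdef
  set F : ℕ → ℝ :=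
    fun m => ⨆ m' : Fin m, ⨆ i' : Fin (N + 1), |f (i' : ℕ) ((m' : ℕ) + 1)| with hFdef
  -- Gamma facts
  have hΓ1 : 0 < Real.Gamma (1 - α) := Real.Gamma_pos_of_pos (by linarith)
  have hΓ2 : 0 < Real.Gamma (2 - α) := Real.Gamma_pos_of_pos (by linarith)
  have hΓeq : Real.Gamma (2 - α) = (1 - α) * Real.Gamma (1 - α) := by
    have h1 : ((1 : ℝ) - α) ≠ 0 := by linarith
    have := Real.Gamma_add_one h1
    rw [show (2 : ℝ) - α = (1 - α) + 1 by ring, this]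
  have hC : 0 < C := mul_pos (Real.rpow_pos_of_pos hT α) hΓ1
  -- sup facts
  have hbdd : ∀ g : Fin (N + 1) → ℝ, BddAbove (Set.range g) := fun g =>
    Set.Finite.bddAbove (Set.finite_range g)
  have hbdd' : ∀ (m : ℕ) (g : Fin m → ℝ), BddAbove (Set.range g) := fun m g =>
    Set.Finite.bddAbove (Set.finite_range g)
  have habsφ : ∀ i ≤ N, |φ i| ≤ Φ := by
    intro i hi
    have := le_ciSup (hbdd fun i' : Fin (N + 1) => |φ (i' : ℕ)|) ⟨i, by omega⟩
    simpa using this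
  have hΦ0 : 0 ≤ Φ := le_trans (abs_nonneg _) (habsφ 0 (by omega))
  have hF0 : F 0 = 0 := by
    simp only [hFdef]
    exact Real.iSup_of_isEmpty _
  have hfF : ∀ m, 1 ≤ m → m ≤ M → ∀ i ≤ N, |f i m| ≤ F m := by
    intro m hm hmM i hi
    have h1 : |f i m| ≤ ⨆ i' : Fin (N + 1), |f (i' : ℕ) ((m - 1) + 1)| := by
      have := le_ciSup (hbdd fun i' : Fin (N + 1) => |f (i' : ℕ) ((m - 1) + 1)|)
        ⟨i, by omega⟩
      simpa [show m - 1 + 1 = m by omega] using this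
    refine h1.trans ?_
    have := le_ciSup (hbdd' m fun m' : Fin m =>
      ⨆ i' : Fin (N + 1), |f (i' : ℕ) ((m' : ℕ) + 1)|) ⟨m - 1, by omega⟩
    simpa using this
  have hFnonneg : ∀ m, 0 ≤ F m := by
    intro m
    rcases Nat.eq_zero_or_pos m with rfl | hm
    · rw [hF0]
    · have h1 : (0 : ℝ) ≤ ⨆ i' : Fin (N + 1), |f (i' : ℕ) (0 + 1)| :=
        le_trans (abs_nonneg (f 0 1)) (by
          have := le_ciSup (hbdd fun i' : Fin (N + 1) => |f (i' : ℕ) (0 + 1)|)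
            (⟨0, by omega⟩ : Fin (N + 1))
          simpa using this)
      refine h1.trans ?_
      have := le_ciSup (hbdd' m fun m' : Fin m =>
        ⨆ i' : Fin (N + 1), |f (i' : ℕ) ((m' : ℕ) + 1)|) ⟨0, hm⟩
      simpa using this
  have hFmono : ∀ a b, a ≤ b → F a ≤ F b := by
    intro a b hab
    rcases Nat.eq_zero_or_pos a with rfl | ha
    · rw [hF0]; exact hFnonneg b
    · have : Nonempty (Fin a) := ⟨⟨0, ha⟩⟩
      refine ciSup_le fun m' => ?_
      have := le_ciSup (hbdd' b fun m'' : Fin b =>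
        ⨆ i' : Fin (N + 1), |f (i' : ℕ) ((m'' : ℕ) + 1)|)
        ⟨(m' : ℕ), lt_of_lt_of_le m'.2 hab⟩
      simpa using this
  -- mesh facts
  have hlt : ∀ b : ℕ, b ≤ M → ∀ a : ℕ, a < b → t a < t b := by
    intro b
    induction b with
    | zero => intro _ a ha; omega
    | succ n ih =>
      intro hbM a hab
      rcases Nat.lt_succ_iff_lt_or_eq.mp hab with h' | h'
      · exact lt_trans (ih (by omega) a h') (htmono n (by omega))
      · subst h'; exact htmono a (by omega)
  have htle : ∀ a b : ℕ, a ≤ b → b ≤ M → t a ≤ t b := by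
    intro a b hab hbM
    rcases eq_or_lt_of_le hab with rfl | h'
    · exact le_refl _
    · exact (hlt b hbM a h').le
  have htpos : ∀ b : ℕ, 1 ≤ b → b ≤ M → 0 < t b := by
    intro b hb hbM
    have h' := hlt b hbM 0 hb
    rw [ht0] at h'
    exact h'
  -- weight positivity
  have hd_pos : ∀ k j : ℕ, 1 ≤ j → j ≤ k → k ≤ M → 0 < d k j := by
    intro k j hj hjk hkM
    rw [hd k j hj hjk hkM]
    have h1 : t (j - 1) < t j := hlt j (by omega) (j - 1) (by omega)
    have h2 : t j ≤ t k := htle j k hjk hkM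
    have h3 : (0 : ℝ) ≤ t k - t j := by linarith
    have h4 : t k - t j < t k - t (j - 1) := by linarith
    have h5 : (t k - t j) ^ (1 - α) < (t k - t (j - 1)) ^ (1 - α) :=
      Real.rpow_lt_rpow h3 h4 (by linarith)
    exact div_pos (by linarith) (by linarith)
  -- weight monotonicity (concavity of x ^ (1-α))
  have hd_mono : ∀ k j : ℕ, 1 ≤ j → j + 1 ≤ k → k ≤ M → d k j ≤ d k (j + 1) := by
    intro k j hj hjk hkM
    have hA0 : (0 : ℝ) ≤ t k - t (j + 1) := by
      have := htle (j + 1) k hjk hkM; linarith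
    have hAB : t k - t (j + 1) < t k - t j := by
      have := hlt (j + 1) (by omega) j (by omega); linarith
    have hBC : t k - t j < t k - t (j - 1) := by
      have := hlt j (by omega) (j - 1) (by omega); linarith
    have hC0 : (0 : ℝ) ≤ t k - t (j - 1) := by linarith
    have hslope := (Real.concaveOn_rpow (by linarith : (0:ℝ) ≤ 1 - α)
      (by linarith : (1:ℝ) - α ≤ 1)).slope_anti_adjacent
      (Set.mem_Ici.mpr hA0) (Set.mem_Ici.mpr hC0) hAB hBC
    rw [hd k j hj (by omega) hkM, hd k (j + 1) (by omega) hjk hkM]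
    have e1 : (t k - t (j - 1)) - (t k - t j) = t j - t (j - 1) := by ring
    have e2 : (t k - t j) - (t k - t (j + 1)) = t (j + 1) - t j := by ring
    have e3 : (j + 1) - 1 = j := by omega
    rw [e3]
    calc ((t k - t (j - 1)) ^ (1 - α) - (t k - t j) ^ (1 - α)) / (t j - t (j - 1))
        = ((t k - t (j - 1)) ^ (1 - α) - (t k - t j) ^ (1 - α)) /
            ((t k - t (j - 1)) - (t k - t j)) := by rw [e1]
      _ ≤ ((t k - t j) ^ (1 - α) - (t k - t (j + 1)) ^ (1 - α)) /
            ((t k - t j) - (t k - t (j + 1))) := hslope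
      _ = ((t k - t j) ^ (1 - α) - (t k - t (j + 1)) ^ (1 - α)) / (t (j + 1) - t j) := by
            rw [e2]
  -- key lower bound on d k 1
  have hd_key : ∀ k : ℕ, 1 ≤ k → k ≤ M → Real.Gamma (2 - α) ≤ d k 1 * C := by
    intro k hk hkM
    have htk : 0 < t k := htpos k hk hkM
    have ht1 : 0 < t 1 := htpos 1 le_rfl (by omega)
    have ht1k : t 1 ≤ t k := htle 1 k hk hkM
    have htkT : t k ≤ T := le_trans (htle k M hkM le_rfl) htT
    have hamgm : (t k - t 1) ^ (1 - α) * (t k) ^ α ≤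
        (1 - α) * (t k - t 1) + α * t k :=
      Real.geom_mean_le_arith_mean2_weighted (by linarith) hα0.le
        (by linarith) htk.le (by ring)
    have hpow : (t k) ^ (1 - α) * (t k) ^ α = t k := by
      rw [← Real.rpow_add htk]
      norm_num
    have hTα : 0 < T ^ α := Real.rpow_pos_of_pos hT α
    have htkα : 0 < (t k) ^ α := Real.rpow_pos_of_pos htk α
    have htkTα : (t k) ^ α ≤ T ^ α := Real.rpow_le_rpow htk.le htkT hα0.le
    -- numerator bound: t k ^ (1-α) - (t k - t 1)^(1-α) ≥ (1-α) * t 1 / (t k)^α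
    have hnum : (1 - α) * t 1 / (t k) ^ α ≤
        (t k) ^ (1 - α) - (t k - t 1) ^ (1 - α) := by
      rw [div_le_iff₀ htkα]
      nlinarith [hamgm, hpow]
    have hd1 : d k 1 = ((t k) ^ (1 - α) - (t k - t 1) ^ (1 - α)) / t 1 := by
      rw [hd k 1 le_rfl hk hkM]
      simp [ht0]
    have hdge : (1 - α) / (t k) ^ α ≤ d k 1 := by
      rw [hd1, le_div_iff₀ ht1]
      calc (1 - α) / (t k) ^ α * t 1 = (1 - α) * t 1 / (t k) ^ α := by ring
        _ ≤ _ := hnum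
    have hdge' : (1 - α) / T ^ α ≤ d k 1 := by
      refine le_trans ?_ hdge
      apply div_le_div_of_nonneg_left (by linarith) htkα htkTα
    rw [hΓeq, hCdef]
    calc (1 - α) * Real.Gamma (1 - α)
        = ((1 - α) / T ^ α) * (T ^ α * Real.Gamma (1 - α)) := by
          field_simp
      _ ≤ d k 1 * (T ^ α * Real.Gamma (1 - α)) := by
          apply mul_le_mul_of_nonneg_right hdge' (by positivity)
  -- h positivity
  have hhpos : 0 < h := by
    rw [hh]; positivity
  have hh2 : 0 < h ^ 2 := by positivity
  -- main induction
  have key : ∀ k, k ≤ M → ∀ i ≤ N, |u i k| ≤ Φ + C * F k := by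
    intro k
    induction k using Nat.strong_induction_on with
    | _ k ih =>
      intro hkM i hiN
      rcases Nat.eq_zero_or_pos k with rfl | hk1
      · rw [hIC i hiN, hF0, mul_zero, add_zero]
        exact habsφ i hiN
      -- k ≥ 1
      have hW : 0 ≤ Φ + C * F k :=
        add_nonneg hΦ0 (mul_nonneg hC.le (hFnonneg k))
      obtain ⟨i₀, hmax⟩ := Finite.exists_max (fun i' : Fin (N + 1) => |u (i' : ℕ) k|)
      have hred : |u (i₀ : ℕ) k| ≤ Φ + C * F k → |u i k| ≤ Φ + C * F k := by
        intro H
        exact le_trans (hmax ⟨i, by omega⟩) H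
      apply hred
      rcases eq_or_ne (i₀ : ℕ) 0 with h0 | h0
      · rw [h0, (hBC k hkM).1, abs_zero]; exact hW
      rcases eq_or_ne (i₀ : ℕ) N with hNe | hNe
      · rw [hNe, (hBC k hkM).2, abs_zero]; exact hW
      have hi₀1 : 1 ≤ (i₀ : ℕ) := by omega
      have hi₀N : (i₀ : ℕ) ≤ N - 1 := by have := i₀.2; omega
      set i₁ : ℕ := (i₀ : ℕ) with hi₁def
      -- sign
      set s : ℝ := if u i₁ k < 0 then -1 else 1 with hsdef
      have hs_abs : s * u i₁ k = |u i₁ k| := by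
        rcases lt_or_ge (u i₁ k) 0 with hneg | hpos
        · rw [hsdef, if_pos hneg, abs_of_neg hneg]; ring
        · rw [hsdef, if_neg (not_lt.mpr hpos), abs_of_nonneg hpos]; ring
      have hs_le : ∀ x : ℝ, s * x ≤ |x| := by
        intro x
        rcases lt_or_ge (u i₁ k) 0 with hneg | hpos
        · rw [hsdef, if_pos hneg]; rw [neg_one_mul]; exact neg_le_abs x
        · rw [hsdef, if_neg (not_lt.mpr hpos)]; rw [one_mul]; exact le_abs_self x
      set v : ℕ → ℝ := fun j => s * u i₁ j with hvdef
      -- the scheme at i₁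
      have E := hscheme i₁ hi₀1 hi₀N k hk1 hkM
      -- step 1: sum bound
      have hstep1 : ∑ j ∈ Finset.Icc 1 k, d k j * (v j - v (j - 1)) ≤
          Real.Gamma (2 - α) * F k := by
        have hsum : ∑ j ∈ Finset.Icc 1 k, d k j * (v j - v (j - 1)) =
            s * ∑ j ∈ Finset.Icc 1 k, d k j * (u i₁ j - u i₁ (j - 1)) := by
          rw [Finset.mul_sum]
          refine Finset.sum_congr rfl fun j _ => by simp only [hvdef]; ring
        -- multiply the scheme by s
        have hfb : s * f i₁ k ≤ F k := le_trans (hs_le _) (hfF k hk1 hkM i₁ (by omega))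
        have hlap : s * (u (i₁ + 1) k - 2 * u i₁ k + u (i₁ - 1) k) ≤ 0 := by
          have hup : s * u (i₁ + 1) k ≤ |u i₁ k| :=
            le_trans (hs_le _) (hmax ⟨i₁ + 1, by omega⟩)
          have hdn : s * u (i₁ - 1) k ≤ |u i₁ k| :=
            le_trans (hs_le _) (hmax ⟨i₁ - 1, by omega⟩)
          have e : s * (u (i₁ + 1) k - 2 * u i₁ k + u (i₁ - 1) k)
              = s * u (i₁ + 1) k + s * u (i₁ - 1) k - 2 * (s * u i₁ k) := by ring
          rw [e, hs_abs]
          linarith [hup, hdn]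
        have hpu : 0 ≤ p k * (s * u i₁ k) := by
          rw [hs_abs]; exact mul_nonneg (hp k hkM) (abs_nonneg _)
        have hne : Real.Gamma (2 - α) ≠ 0 := ne_of_gt hΓ2
        have h1 : (1 / Real.Gamma (2 - α)) *
            (∑ j ∈ Finset.Icc 1 k, d k j * (u i₁ j - u i₁ (j - 1)))
            = f i₁ k + (u (i₁ + 1) k - 2 * u i₁ k + u (i₁ - 1) k) / h ^ 2
              - p k * u i₁ k := by
          linarith [E]
        have hSigma : ∑ j ∈ Finset.Icc 1 k, d k j * (u i₁ j - u i₁ (j - 1))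
            = Real.Gamma (2 - α) * (f i₁ k +
              (u (i₁ + 1) k - 2 * u i₁ k + u (i₁ - 1) k) / h ^ 2 - p k * u i₁ k) := by
          rw [← h1, ← mul_assoc, mul_one_div_cancel hne, one_mul]
        have hin : s * (f i₁ k + (u (i₁ + 1) k - 2 * u i₁ k + u (i₁ - 1) k) / h ^ 2
            - p k * u i₁ k) ≤ F k := by
          have e : s * (f i₁ k + (u (i₁ + 1) k - 2 * u i₁ k + u (i₁ - 1) k) / h ^ 2
              - p k * u i₁ k)
              = s * f i₁ k + (s * (u (i₁ + 1) k - 2 * u i₁ k + u (i₁ - 1) k)) / h ^ 2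
                - p k * (s * u i₁ k) := by ring
          rw [e]
          have h2 : (s * (u (i₁ + 1) k - 2 * u i₁ k + u (i₁ - 1) k)) / h ^ 2 ≤ 0 :=
            div_nonpos_of_nonpos_of_nonneg hlap hh2.le
          linarith [hfb, hpu, h2]
        rw [hsum, hSigma]
        calc s * (Real.Gamma (2 - α) * (f i₁ k +
              (u (i₁ + 1) k - 2 * u i₁ k + u (i₁ - 1) k) / h ^ 2 - p k * u i₁ k))
            = Real.Gamma (2 - α) * (s * (f i₁ k +
              (u (i₁ + 1) k - 2 * u i₁ k + u (i₁ - 1) k) / h ^ 2 - p k * u i₁ k)) := by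
              ring
          _ ≤ Real.Gamma (2 - α) * F k := mul_le_mul_of_nonneg_left hin hΓ2.le
      -- step 2: Abel summation
      have habel : ∑ j ∈ Finset.Icc 1 k, d k j * (v j - v (j - 1)) =
          d k k * v k - d k 1 * v 0 -
            ∑ i' ∈ Finset.range (k - 1), (d k (i' + 2) - d k (i' + 1)) * v (i' + 1) := by
        have hconv : ∑ j ∈ Finset.Icc 1 k, d k j * (v j - v (j - 1)) =
            ∑ i' ∈ Finset.range k, d k (i' + 1) * (v (i' + 1) - v i') := by
          rw [show Finset.Icc 1 k = Finset.Ico 1 (k + 1) from (Finset.Ico_add_one_right_eq_Icc 1 k).symm,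
            Finset.sum_Ico_eq_sum_range]
          refine Finset.sum_congr (by norm_num) fun i' _ => by
            rw [show 1 + i' = i' + 1 from by omega]
            simp
        obtain ⟨m, rfl⟩ : ∃ m, k = m + 1 := ⟨k - 1, by omega⟩
        rw [hconv]
        simpa using abel_sum_aux (fun j => d (m + 1) j) v m
      -- step 3: combine
      have hsum_coef : ∑ i' ∈ Finset.range (k - 1),
          (d k (i' + 2) - d k (i' + 1)) * v (i' + 1) ≤
          (d k k - d k 1) * (Φ + C * F k) := by
        have hterm : ∀ i' ∈ Finset.range (k - 1),
            (d k (i' + 2) - d k (i' + 1)) * v (i' + 1) ≤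
            (d k (i' + 2) - d k (i' + 1)) * (Φ + C * F k) := by
          intro i' hi'
          rw [Finset.mem_range] at hi'
          have hcoef : 0 ≤ d k (i' + 2) - d k (i' + 1) := by
            have := hd_mono k (i' + 1) (by omega) (by omega) hkM
            linarith
          apply mul_le_mul_of_nonneg_left _ hcoef
          calc v (i' + 1) ≤ |u i₁ (i' + 1)| := hs_le _
            _ ≤ Φ + C * F (i' + 1) := ih (i' + 1) (by omega) (by omega) i₁ (by omega)
            _ ≤ Φ + C * F k := by
                have := hFmono (i' + 1) k (by omega)
                nlinarith [hC]
        calc ∑ i' ∈ Finset.range (k - 1), (d k (i' + 2) - d k (i' + 1)) * v (i' + 1)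
            ≤ ∑ i' ∈ Finset.range (k - 1),
                (d k (i' + 2) - d k (i' + 1)) * (Φ + C * F k) :=
              Finset.sum_le_sum hterm
          _ = (∑ i' ∈ Finset.range (k - 1), (d k (i' + 2) - d k (i' + 1))) *
                (Φ + C * F k) := by rw [← Finset.sum_mul]
          _ = (d k k - d k 1) * (Φ + C * F k) := by
              congr 1
              have htel := Finset.sum_range_sub (fun i' => d k (i' + 1)) (k - 1)
              have hre : ∑ i' ∈ Finset.range (k - 1), (d k (i' + 2) - d k (i' + 1)) =
                  ∑ i' ∈ Finset.range (k - 1),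
                    ((fun j => d k (j + 1)) (i' + 1) - (fun j => d k (j + 1)) i') :=
                Finset.sum_congr rfl fun i' _ => rfl
              rw [hre, htel, show k - 1 + 1 = k from by omega]
      -- step 4: final combination
      have hd1pos := hd_pos k 1 le_rfl hk1 hkM
      have hdkpos := hd_pos k k hk1 le_rfl hkM
      have hv0 : v 0 ≤ Φ := by
        have : v 0 ≤ |u i₁ 0| := hs_le _
        rw [hIC i₁ (by omega)] at this
        exact this.trans (habsφ i₁ (by omega))
      have hv0' : d k 1 * v 0 ≤ d k 1 * Φ :=
        mul_le_mul_of_nonneg_left hv0 hd1pos.le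
      have hGF : Real.Gamma (2 - α) * F k ≤ d k 1 * C * F k :=
        mul_le_mul_of_nonneg_right (hd_key k hk1 hkM) (hFnonneg k)
      have hid : d k 1 * C * F k + d k 1 * Φ + (d k k - d k 1) * (Φ + C * F k) =
          d k k * (Φ + C * F k) := by ring
      have hfinal : d k k * v k ≤ d k k * (Φ + C * F k) := by
        rw [habel] at hstep1
        linarith [hstep1, hsum_coef, hv0', hGF, hid]
      have : v k ≤ Φ + C * F k := le_of_mul_le_mul_left hfinal hdkpos
      rw [hvdef] at this
      simp only [] at this
      rw [hs_abs] at this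
      exact this
  intro k hk1 hkM i hiN
  exact key k hkM i hiN
end

section
/- Let 0<α<1, l>0, T>0, integers N≥2 and M≥1, h = l/N, a time mesh 0 = t₀ < t₁ < ⋯ < t_M ≤ T with τ_k = t_k − t_{k−1}, L1 weights d_{k,j} = ((t_k−t_{j−1})^{1−α} − (t_k−t_j)^{1−α})/(t_j−t_{j−1}), and p^k ≥ 0. Suppose real numbers e_i^k (0≤i≤N, 0≤k≤M) satisfy e_i^0 = 0, e_0^k = e_N^k = 0, and for all 1≤i≤N−1, 1≤k≤M: (1/Γ(2−α)) Σ_{j=1}^{k} d_{k,j}(e_i^j − e_i^{j−1}) − (e_{i+1}^k − 2e_i^k + e_{i−1}^k)/h² + p^k e_i^k = ξ_i^k, where the residuals satisfy max_i |ξ_i^k| ≤ ε for all k. Then for every 0≤k≤M: max_{0≤i≤N} |e_i^k| ≤ T^α Γ(1−α) · ε. -/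
/-- Abel (summation by parts) identity for the L1 sum. -/
lemma L1_abel_sum (d x : ℕ → ℝ) : ∀ k : ℕ, 1 ≤ k →
    ∑ j ∈ Finset.Icc 1 k, d j * (x j - x (j - 1)) =
      d k * x k - d 1 * x 0 +
        ∑ j ∈ Finset.Icc 1 (k - 1), (d j - d (j + 1)) * x j := by
  intro k hk
  induction k, hk using Nat.le_induction with
  | base => simp; ring
  | succ k hk ih =>
    obtain ⟨m, rfl⟩ : ∃ m, k = m + 1 := ⟨k - 1, by omega⟩
    simp only [Nat.add_sub_cancel] at ih ⊢
    rw [Finset.sum_Icc_succ_top (by omega : 1 ≤ m + 1 + 1), ih,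
      Finset.sum_Icc_succ_top (by omega : 1 ≤ m + 1)]
    simp only [Nat.add_sub_cancel]
    ring

/-- Concavity-type lower bound for slopes of `x ^ (1 - α)`. -/
lemma L1_rpow_slope_lower {α a b : ℝ} (hα0 : 0 < α) (hα1 : α < 1)
    (ha : 0 ≤ a) (hab : a < b) :
    (1 - α) * b ^ (-α) * (b - a) ≤ b ^ (1 - α) - a ^ (1 - α) := by
  have hb : 0 < b := lt_of_le_of_lt ha hab
  have hB : 0 < b ^ α := Real.rpow_pos_of_pos hb α
  have amgm : a ^ (1 - α) * b ^ α ≤ (1 - α) * a + α * b :=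
    Real.geom_mean_le_arith_mean2_weighted (by linarith) hα0.le ha hb.le (by ring)
  have h1 : b ^ (1 - α) = b / b ^ α := by
    rw [Real.rpow_sub hb, Real.rpow_one]
  have h2 : b ^ (-α) = 1 / b ^ α := by
    rw [Real.rpow_neg hb.le, one_div]
  have h3 : a ^ (1 - α) ≤ ((1 - α) * a + α * b) / b ^ α := by
    rw [le_div_iff₀ hB]; exact amgm
  have h4 : (1 - α) * (1 / b ^ α) * (b - a)
      = b / b ^ α - ((1 - α) * a + α * b) / b ^ α := by
    field_simp; ring
  rw [h1, h2, h4]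
  linarith

/-- Error-propagation estimate for the fully implicit L1 finite-difference
scheme: if the errors `e_i^k` satisfy the scheme with residuals `ξ_i^k` as
source, zero initial and boundary data, and `max_i |ξ_i^k| ≤ ε`, then
`max_i |e_i^k| ≤ T^α Γ(1−α) ε` for all `k`. -/
theorem L1_scheme_error_propagation (α l T : ℝ) (hα0 : 0 < α) (hα1 : α < 1)
    (hl : 0 < l) (hT : 0 < T) (N M : ℕ) (hN : 2 ≤ N) (hM : 1 ≤ M)
    (h : ℝ) (hh : h = l / N)
    (t : ℕ → ℝ) (ht0 : t 0 = 0) (htmono : ∀ k, k < M → t k < t (k + 1))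
    (htT : t M ≤ T)
    (d : ℕ → ℕ → ℝ)
    (hd : ∀ k j : ℕ, 1 ≤ j → j ≤ k → k ≤ M →
      d k j = ((t k - t (j - 1)) ^ (1 - α) - (t k - t j) ^ (1 - α)) /
        (t j - t (j - 1)))
    (p : ℕ → ℝ) (hp : ∀ k ≤ M, 0 ≤ p k)
    (e ξ : ℕ → ℕ → ℝ) (ε : ℝ)
    (hIC : ∀ i ≤ N, e i 0 = 0)
    (hBC : ∀ k ≤ M, e 0 k = 0 ∧ e N k = 0)
    (hscheme : ∀ i, 1 ≤ i → i ≤ N - 1 → ∀ k, 1 ≤ k → k ≤ M →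
      (1 / Real.Gamma (2 - α)) *
          (∑ j ∈ Finset.Icc 1 k, d k j * (e i j - e i (j - 1)))
        - (e (i + 1) k - 2 * e i k + e (i - 1) k) / h ^ 2
        + p k * e i k = ξ i k)
    (hξ : ∀ k, 1 ≤ k → k ≤ M → ∀ i ≤ N, |ξ i k| ≤ ε) :
    ∀ k ≤ M, ∀ i ≤ N, |e i k| ≤ T ^ α * Real.Gamma (1 - α) * ε := by
  have hα1' : (0:ℝ) < 1 - α := by linarith
  have hΓ1 : 0 < Real.Gamma (1 - α) := Real.Gamma_pos_of_pos hα1'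
  have hΓ2pos : 0 < Real.Gamma (2 - α) := Real.Gamma_pos_of_pos (by linarith)
  have hΓeq : Real.Gamma (2 - α) = (1 - α) * Real.Gamma (1 - α) := by
    have h2 : (2:ℝ) - α = (1 - α) + 1 := by ring
    rw [h2, Real.Gamma_add_one (ne_of_gt hα1')]
  have hε : 0 ≤ ε := le_trans (abs_nonneg _) (hξ 1 le_rfl hM 1 (by omega))
  have hTα : 0 < T ^ α := Real.rpow_pos_of_pos hT α
  set C := T ^ α * Real.Gamma (1 - α) * ε with hCdef
  have hC0 : 0 ≤ C := by positivity
  have hN0 : (0:ℝ) < (N:ℝ) := by exact_mod_cast (by omega : 0 < N)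
  have hhpos : 0 < h := by rw [hh]; positivity
  have hh2 : 0 < h ^ 2 := by positivity
  -- monotonicity of the time mesh
  have htm : ∀ b, b ≤ M → ∀ a, a ≤ b → t a ≤ t b := by
    intro b hb
    induction b with
    | zero => intro a ha; rw [Nat.le_zero.mp ha]
    | succ n ihn =>
      intro a ha
      rcases Nat.lt_succ_iff_lt_or_eq.mp (Nat.lt_succ_of_le ha) with h' | rfl
      · exact le_trans (ihn (by omega) a (by omega)) (htmono n (by omega)).le
      · exact le_rfl
  have htstep : ∀ j, 1 ≤ j → j ≤ M → t (j - 1) < t j := by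
    intro j h1 h2
    have := htmono (j - 1) (by omega)
    rwa [Nat.sub_add_cancel h1] at this
  have htpos : ∀ j, 1 ≤ j → j ≤ M → 0 < t j := by
    intro j h1 h2
    have h3 := htstep j h1 h2
    have h4 : t 0 ≤ t (j - 1) := htm (j - 1) (by omega) 0 (by omega)
    rw [ht0] at h4; linarith
  intro k
  induction k using Nat.strong_induction_on with
  | _ k ih =>
  intro hk i hi
  rcases Nat.eq_zero_or_pos k with rfl | hk1
  · rw [hIC i hi]; simpa using hC0
  -- properties of the weights d k j
  have hconc : ConcaveOn ℝ (Set.Ici 0) fun x : ℝ => x ^ (1 - α) :=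
    Real.concaveOn_rpow hα1'.le (by linarith)
  have hdmono : ∀ j, 1 ≤ j → j + 1 ≤ k → d k j ≤ d k (j + 1) := by
    intro j h1 h2
    have hjM : j + 1 ≤ M := le_trans h2 hk
    have ha' : (0:ℝ) ≤ t k - t (j + 1) :=
      sub_nonneg.2 (htm k hk (j + 1) h2)
    have haa : t k - t (j + 1) < t k - t j := by
      have := htmono j (by omega); linarith
    have hab : t k - t j < t k - t (j - 1) := by
      have := htstep j h1 (by omega); linarith
    have e1 : d k j = ((t k - t (j - 1)) ^ (1 - α) - (t k - t j) ^ (1 - α)) /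
        ((t k - t (j - 1)) - (t k - t j)) := by
      rw [hd k j h1 (by omega) hk]; congr 1; ring
    have e2 : d k (j + 1) = ((t k - t j) ^ (1 - α) - (t k - t (j + 1)) ^ (1 - α)) /
        ((t k - t j) - (t k - t (j + 1))) := by
      rw [hd k (j + 1) (by omega) h2 hk]
      simp only [Nat.add_sub_cancel]
      congr 1; ring
    rw [e1, e2]
    have hbmem : (t k - t (j - 1)) ∈ Set.Ici (0:ℝ) := by
      simp only [Set.mem_Ici]
      exact sub_nonneg.2 (htm k hk (j - 1) (by omega))
    exact hconc.slope_anti_adjacent (Set.mem_Ici.2 ha') hbmem haa hab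
  have hdk_low : (1 - α) / T ^ α ≤ d k 1 := by
    rw [hd k 1 le_rfl hk1 hk]
    have h00 : t (1 - 1) = 0 := by norm_num [ht0]
    rw [h00, sub_zero, sub_zero]
    have hbpos : 0 < t k := htpos k hk1 hk
    have ht1pos : 0 < t 1 := htpos 1 le_rfl hM
    have ha0 : 0 ≤ t k - t 1 := sub_nonneg.2 (htm k hk 1 hk1)
    have hab : t k - t 1 < t k := by linarith
    have key := L1_rpow_slope_lower hα0 hα1 ha0 hab
    have hsimp : t k - (t k - t 1) = t 1 := by ring
    rw [hsimp] at key
    have htkT : t k ≤ T := le_trans (htm M le_rfl k hk) htT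
    have hmono : t k ^ α ≤ T ^ α := Real.rpow_le_rpow hbpos.le htkT hα0.le
    have htkα : 0 < t k ^ α := Real.rpow_pos_of_pos hbpos α
    have h6 : (1 - α) / T ^ α ≤ (1 - α) * t k ^ (-α) := by
      rw [Real.rpow_neg hbpos.le, mul_comm, ← div_eq_inv_mul]
      calc (1 - α) / T ^ α ≤ (1 - α) / t k ^ α :=
            div_le_div_of_nonneg_left hα1'.le htkα hmono
        _ = (1 - α) / t k ^ α := rfl
    rw [le_div_iff₀ ht1pos]
    calc (1 - α) / T ^ α * t 1 ≤ (1 - α) * t k ^ (-α) * t 1 :=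
          mul_le_mul_of_nonneg_right h6 ht1pos.le
      _ ≤ t k ^ (1 - α) - (t k - t 1) ^ (1 - α) := key
  have hdkk : 0 < d k k := by
    rw [hd k k hk1 le_rfl hk]
    have hstep := htstep k hk1 hk
    apply div_pos _ (by linarith)
    have : t k - t k = 0 := by ring
    rw [this, Real.zero_rpow (ne_of_gt hα1'), sub_zero]
    exact Real.rpow_pos_of_pos (by linarith) _
  -- maximum point
  obtain ⟨i₀, hi₀mem, hi₀max⟩ :=
    Finset.exists_max_image (Finset.range (N + 1)) (fun i => |e i k|)
      ⟨0, by simp⟩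
  have hi₀N : i₀ ≤ N := by
    have := Finset.mem_range.1 hi₀mem; omega
  set A := |e i₀ k| with hAdef
  have hAle : ∀ i' ≤ N, |e i' k| ≤ A := fun i' h' =>
    hi₀max i' (Finset.mem_range.2 (by omega))
  suffices hAC : A ≤ C from le_trans (hAle i hi) hAC
  by_cases h0 : i₀ = 0
  · rw [hAdef, h0, (hBC k hk).1]; simpa using hC0
  by_cases hNN : i₀ = N
  · rw [hAdef, hNN, (hBC k hk).2]; simpa using hC0
  have h1i : 1 ≤ i₀ := by omega
  have hiN1 : i₀ ≤ N - 1 := by omega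
  have Hs := hscheme i₀ h1i hiN1 k hk1 hk
  set s : ℝ := if 0 ≤ e i₀ k then 1 else -1 with hs
  have hsmul : ∀ x : ℝ, s * x ≤ |x| := by
    intro x
    rw [hs]; split_ifs
    · rw [one_mul]; exact le_abs_self x
    · rw [neg_one_mul]; exact neg_le_abs x
  have hsA : s * e i₀ k = A := by
    rw [hAdef, hs]; split_ifs with hcase
    · rw [one_mul, abs_of_nonneg hcase]
    · rw [neg_one_mul, abs_of_neg (by linarith)]
  have habel := L1_abel_sum (d k) (e i₀) k hk1
  -- coefficients sum (telescoping)
  have htel : ∑ j ∈ Finset.Icc 1 (k - 1), (d k j - d k (j + 1)) = d k 1 - d k k := by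
    have h := L1_abel_sum (d k) (fun _ => 1) k hk1
    simp only [sub_self, mul_zero, Finset.sum_const_zero, mul_one] at h
    linarith
  -- lower bound for the history sum
  have hSsum : (d k 1 - d k k) * C ≤
      ∑ j ∈ Finset.Icc 1 (k - 1), (d k j - d k (j + 1)) * (s * e i₀ j) := by
    calc (d k 1 - d k k) * C
        = ∑ j ∈ Finset.Icc 1 (k - 1), (d k j - d k (j + 1)) * C := by
          rw [← Finset.sum_mul, htel]
      _ ≤ _ := by
          apply Finset.sum_le_sum
          intro j hj
          obtain ⟨hj1, hj2⟩ := Finset.mem_Icc.1 hj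
          have hcoef : d k j - d k (j + 1) ≤ 0 :=
            sub_nonpos.2 (hdmono j hj1 (by omega))
          have hej : s * e i₀ j ≤ C :=
            le_trans (hsmul _) (ih j (by omega) (by omega) i₀ hi₀N)
          nlinarith
  -- multiply the scheme by s
  have hswap : s * (∑ j ∈ Finset.Icc 1 (k - 1), (d k j - d k (j + 1)) * e i₀ j)
      = ∑ j ∈ Finset.Icc 1 (k - 1), (d k j - d k (j + 1)) * (s * e i₀ j) := by
    rw [Finset.mul_sum]
    exact Finset.sum_congr rfl (fun j _ => by ring)
  have Hs' : s * ξ i₀ k =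
      (1 / Real.Gamma (2 - α)) * (d k k * (s * e i₀ k) +
        ∑ j ∈ Finset.Icc 1 (k - 1), (d k j - d k (j + 1)) * (s * e i₀ j))
      - (s * e (i₀ + 1) k - 2 * (s * e i₀ k) + s * e (i₀ - 1) k) / h ^ 2
      + p k * (s * e i₀ k) := by
    rw [← Hs, habel, hIC i₀ hi₀N, ← hswap]
    ring
  -- sign bounds
  have hlapA : s * e (i₀ + 1) k ≤ A :=
    le_trans (hsmul _) (hAle (i₀ + 1) (by omega))
  have hlapB : s * e (i₀ - 1) k ≤ A :=
    le_trans (hsmul _) (hAle (i₀ - 1) (by omega))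
  have hlap : 0 ≤ -((s * e (i₀ + 1) k - 2 * (s * e i₀ k) + s * e (i₀ - 1) k) / h ^ 2) := by
    have hrw : -((s * e (i₀ + 1) k - 2 * (s * e i₀ k) + s * e (i₀ - 1) k) / h ^ 2)
        = (2 * (s * e i₀ k) - s * e (i₀ + 1) k - s * e (i₀ - 1) k) / h ^ 2 := by
      ring
    rw [hrw]
    apply div_nonneg _ hh2.le
    have := hsA
    linarith
  have hpterm : 0 ≤ p k * (s * e i₀ k) := by
    apply mul_nonneg (hp k hk)
    rw [hsA]; exact abs_nonneg _
  have hξ' : s * ξ i₀ k ≤ ε := le_trans (hsmul _) (hξ k hk1 hk i₀ hi₀N)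
  -- combine
  have hfac : 0 < 1 / Real.Gamma (2 - α) := by positivity
  have hmain : (1 / Real.Gamma (2 - α)) * (d k k * A + (d k 1 - d k k) * C) ≤ ε := by
    have hstep1 : (1 / Real.Gamma (2 - α)) * (d k k * A + (d k 1 - d k k) * C) ≤
        (1 / Real.Gamma (2 - α)) * (d k k * (s * e i₀ k) +
          ∑ j ∈ Finset.Icc 1 (k - 1), (d k j - d k (j + 1)) * (s * e i₀ j)) := by
      apply mul_le_mul_of_nonneg_left _ hfac.le
      rw [hsA]
      linarith
    linarith [Hs', hlap, hpterm, hξ', hstep1]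
  have h7 : d k k * A + (d k 1 - d k k) * C ≤ Real.Gamma (2 - α) * ε := by
    have := mul_le_mul_of_nonneg_left hmain hΓ2pos.le
    calc d k k * A + (d k 1 - d k k) * C
        = Real.Gamma (2 - α) * ((1 / Real.Gamma (2 - α)) *
            (d k k * A + (d k 1 - d k k) * C)) := by
          field_simp
      _ ≤ Real.Gamma (2 - α) * ε := this
  have h8 : Real.Gamma (2 - α) * ε ≤ d k 1 * C := by
    rw [hΓeq, hCdef]
    have h9 : (1 - α) / T ^ α * (T ^ α * Real.Gamma (1 - α) * ε)
        = (1 - α) * Real.Gamma (1 - α) * ε := by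
      field_simp
    calc (1 - α) * Real.Gamma (1 - α) * ε
        = (1 - α) / T ^ α * (T ^ α * Real.Gamma (1 - α) * ε) := h9.symm
      _ ≤ d k 1 * (T ^ α * Real.Gamma (1 - α) * ε) := by
          apply mul_le_mul_of_nonneg_right hdk_low
          rw [← hCdef]; exact hC0
  have h10 : d k k * A ≤ d k k * C := by linarith
  exact le_of_mul_le_mul_left h10 hdkk
end

section
/- Let 0<α<1, l>0, T>0. Let p:[0,T]→ℝ and f:[0,l]×[0,T]→ℝ be continuous, ω:[0,l]→ℝ twice continuously differentiable, and u:[0,l]×[0,T]→ℝ continuous with ∂u/∂t continuous on [0,l]×[0,T] and u(·,t) twice continuously differentiable on [0,l] for each t. Suppose u satisfies ∂_t^α u − u_xx + p(t)u = f on (0,l)×(0,T], u(0,t)=u(l,t)=0 for all t, and ∫₀^l u(x,t)ω(x) dx = g(t) for all t, where g(t) ≠ 0. Then for every t∈(0,T]: p(t) = [ u_x(l,t)ω(l) − u_x(0,t)ω(0) + ∫₀^l u(x,t)ω″(x) dx + ∫₀^l f(x,t)ω(x) dx − ∂_t^α g(t) ] / g(t). -/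
open MeasureTheory Set

/-- Recovery formula for the unknown coefficient `p(t)` from the integral
overdetermination condition `∫₀ˡ u(x,t) ω(x) dx = g(t)`:
`p(t) = [u_x(l,t)ω(l) − u_x(0,t)ω(0) + ∫₀ˡ u ω″ dx + ∫₀ˡ f ω dx − ∂_t^α g(t)] / g(t)`. -/
theorem coefficient_recovery_formula (α l T : ℝ) (hα0 : 0 < α) (hα1 : α < 1)
    (hl : 0 < l) (hT : 0 < T)
    (p : ℝ → ℝ) (f : ℝ → ℝ → ℝ) (ω ω' ω'' : ℝ → ℝ) (g : ℝ → ℝ)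
    (u ut ux uxx : ℝ → ℝ → ℝ)
    (hp_cont : ContinuousOn p (Set.Icc 0 T))
    (hf_cont : ContinuousOn (fun q : ℝ × ℝ => f q.1 q.2)
      (Set.Icc 0 l ×ˢ Set.Icc 0 T))
    (hω' : ∀ x ∈ Set.Icc (0:ℝ) l, HasDerivAt ω (ω' x) x)
    (hω'' : ∀ x ∈ Set.Icc (0:ℝ) l, HasDerivAt ω' (ω'' x) x)
    (hω''_cont : ContinuousOn ω'' (Set.Icc 0 l))
    (hu_cont : ContinuousOn (fun q : ℝ × ℝ => u q.1 q.2)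
      (Set.Icc 0 l ×ˢ Set.Icc 0 T))
    (hut_cont : ContinuousOn (fun q : ℝ × ℝ => ut q.1 q.2)
      (Set.Icc 0 l ×ˢ Set.Icc 0 T))
    (hut : ∀ x ∈ Set.Icc (0:ℝ) l, ∀ s ∈ Set.Icc (0:ℝ) T,
      HasDerivAt (fun τ => u x τ) (ut x s) s)
    (hux : ∀ t ∈ Set.Icc (0:ℝ) T, ∀ x ∈ Set.Icc (0:ℝ) l,
      HasDerivAt (fun y => u y t) (ux x t) x)
    (huxx : ∀ t ∈ Set.Icc (0:ℝ) T, ∀ x ∈ Set.Icc (0:ℝ) l,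
      HasDerivAt (fun y => ux y t) (uxx x t) x)
    (huxx_cont : ∀ t ∈ Set.Icc (0:ℝ) T,
      ContinuousOn (fun x => uxx x t) (Set.Icc 0 l))
    (hPDE : ∀ x ∈ Set.Ioo (0:ℝ) l, ∀ t ∈ Set.Ioc (0:ℝ) T,
      (1 / Real.Gamma (1 - α)) * (∫ s in (0:ℝ)..t, (t - s) ^ (-α) * ut x s)
        - uxx x t + p t * u x t = f x t)
    (hBC : ∀ t ∈ Set.Icc (0:ℝ) T, u 0 t = 0 ∧ u l t = 0)
    (hover : ∀ t ∈ Set.Icc (0:ℝ) T, (∫ x in (0:ℝ)..l, u x t * ω x) = g t)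
    (hg_ne : ∀ t ∈ Set.Icc (0:ℝ) T, g t ≠ 0) :
    ∀ t ∈ Set.Ioc (0:ℝ) T,
      p t = (ux l t * ω l - ux 0 t * ω 0
          + (∫ x in (0:ℝ)..l, u x t * ω'' x)
          + (∫ x in (0:ℝ)..l, f x t * ω x)
          - (1 / Real.Gamma (1 - α)) *
              ∫ s in (0:ℝ)..t, (t - s) ^ (-α) * deriv g s) / g t := by
  intro t ht
  obtain ⟨ht0, htT⟩ := ht
  have htmem : t ∈ Set.Icc (0:ℝ) T := ⟨ht0.le, htT⟩
  have hl0 : (0:ℝ) ≤ l := hl.le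
  have hIcc : Set.uIcc (0:ℝ) l = Set.Icc 0 l := Set.uIcc_of_le hl0
  have hIoc : Set.uIoc (0:ℝ) l = Set.Ioc 0 l := Set.uIoc_of_le hl0
  -- basic continuity facts
  have hω_c : ContinuousOn ω (Set.Icc 0 l) :=
    fun x hx => ((hω' x hx).continuousAt).continuousWithinAt
  have hω'_c : ContinuousOn ω' (Set.Icc 0 l) :=
    fun x hx => ((hω'' x hx).continuousAt).continuousWithinAt
  have hux_c : ContinuousOn (fun x => ux x t) (Set.Icc 0 l) :=
    fun x hx => ((huxx t htmem x hx).continuousAt).continuousWithinAt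
  have hu_c : ∀ s ∈ Set.Icc (0:ℝ) T, ContinuousOn (fun x => u x s) (Set.Icc 0 l) :=
    fun s hs x hx => ((hux s hs x hx).continuousAt).continuousWithinAt
  have hf_c : ContinuousOn (fun x => f x t) (Set.Icc 0 l) :=
    hf_cont.comp ((continuous_id.prodMk continuous_const).continuousOn)
      (fun x hx => Set.mk_mem_prod hx htmem)
  have intInt : ∀ {φ : ℝ → ℝ}, ContinuousOn φ (Set.Icc 0 l) →
      IntervalIntegrable φ volume 0 l :=
    fun h => ContinuousOn.intervalIntegrable (by rwa [hIcc])
  -- bound for `ut x s * ω x` on the compact rectangle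
  have hcomp : IsCompact (Set.Icc (0:ℝ) l ×ˢ Set.Icc (0:ℝ) T) :=
    isCompact_Icc.prod isCompact_Icc
  have hutω_c : ContinuousOn (fun q : ℝ × ℝ => ut q.1 q.2 * ω q.1)
      (Set.Icc 0 l ×ˢ Set.Icc 0 T) :=
    hut_cont.mul (hω_c.comp continuous_fst.continuousOn (fun q hq => hq.1))
  obtain ⟨C, hC⟩ := hcomp.exists_bound_of_continuousOn hutω_c
  -- differentiation under the integral sign : derivative of g
  have hGder : ∀ s ∈ Set.Ioo (0:ℝ) T,
      HasDerivAt (fun τ => ∫ x in (0:ℝ)..l, u x τ * ω x)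
        (∫ x in (0:ℝ)..l, ut x s * ω x) s := by
    intro s hs
    have hε : 0 < min s (T - s) := lt_min hs.1 (by linarith [hs.2])
    have hball : Metric.ball s (min s (T - s)) ⊆ Set.Icc 0 T := by
      intro τ hτ
      rw [Metric.mem_ball, Real.dist_eq] at hτ
      have h1 := abs_lt.1 hτ
      constructor
      · linarith [h1.1, min_le_left s (T - s)]
      · linarith [h1.2, min_le_right s (T - s)]
    refine (intervalIntegral.hasDerivAt_integral_of_dominated_loc_of_deriv_le
      (F := fun τ x => u x τ * ω x) (F' := fun τ x => ut x τ * ω x) (x₀ := s)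
      (a := 0) (b := l) (bound := fun _ => C) (μ := volume) (Metric.ball_mem_nhds s hε)
      ?_ ?_ ?_ ?_ ?_ ?_).2
    · filter_upwards [Icc_mem_nhds hs.1 hs.2] with τ hτ
      rw [hIoc]
      exact (((hu_c τ hτ).mul hω_c).mono Set.Ioc_subset_Icc_self).aestronglyMeasurable
        measurableSet_Ioc
    · exact intInt ((hu_c s (Set.Ioo_subset_Icc_self hs)).mul hω_c)
    · rw [hIoc]
      refine ContinuousOn.aestronglyMeasurable ?_ measurableSet_Ioc
      refine ContinuousOn.mono ?_ Set.Ioc_subset_Icc_self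
      refine ContinuousOn.mul ?_ hω_c
      exact hut_cont.comp ((continuous_id.prodMk continuous_const).continuousOn)
        (fun y hy => Set.mk_mem_prod hy (Set.Ioo_subset_Icc_self hs))
    · refine Filter.Eventually.of_forall (fun x hx τ hτ => ?_)
      rw [hIoc] at hx
      exact hC (x, τ) (Set.mk_mem_prod (Set.Ioc_subset_Icc_self hx) (hball hτ))
    · exact intervalIntegrable_const
    · refine Filter.Eventually.of_forall (fun x hx τ hτ => ?_)
      rw [hIoc] at hx
      exact (hut x (Set.Ioc_subset_Icc_self hx) τ (hball hτ)).mul_const (ω x)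
  have hgder : ∀ s ∈ Set.Ioo (0:ℝ) T,
      deriv g s = ∫ x in (0:ℝ)..l, ut x s * ω x := by
    intro s hs
    have heq : g =ᶠ[nhds s] fun τ => ∫ x in (0:ℝ)..l, u x τ * ω x := by
      filter_upwards [Icc_mem_nhds hs.1 hs.2] with τ hτ
      exact (hover τ hτ).symm
    exact (((hGder s hs).congr_of_eventuallyEq heq)).deriv
  -- replace `deriv g` in the fractional integral
  have hstep1 : (∫ s in (0:ℝ)..t, (t - s) ^ (-α) * deriv g s)
      = ∫ s in (0:ℝ)..t, (t - s) ^ (-α) * ∫ x in (0:ℝ)..l, ut x s * ω x := by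
    apply intervalIntegral.integral_congr_ae
    have hTne : ∀ᵐ s : ℝ, s ≠ T := by
      refine ae_iff.mpr ?_
      rw [show {a : ℝ | ¬ a ≠ T} = {T} by ext a; simp]
      exact measure_singleton T
    filter_upwards [hTne] with s hsne hs
    rw [Set.uIoc_of_le ht0.le] at hs
    have hsT : s ∈ Set.Ioo (0:ℝ) T := ⟨hs.1, lt_of_le_of_ne (hs.2.trans htT) hsne⟩
    rw [hgder s hsT]
  -- integrability of the singular kernel
  have hpow_int : IntervalIntegrable (fun s => (t - s) ^ (-α)) volume 0 t := by
    have h := (intervalIntegral.intervalIntegrable_rpow' (a := 0) (b := t) (r := -α)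
      (by linarith : (-1:ℝ) < -α)).comp_sub_left t
    have h2 := h.symm
    simpa using h2
  have hpow_iOn : IntegrableOn (fun s => (t - s) ^ (-α)) (Set.Ioc 0 t) volume := by
    rw [← Set.uIoc_of_le ht0.le]
    exact intervalIntegrable_iff.1 hpow_int
  -- Fubini
  set μt := volume.restrict (Set.Ioc (0:ℝ) t) with hμt
  set μl := volume.restrict (Set.Ioc (0:ℝ) l) with hμl
  have haemem : ∀ᵐ q ∂(μt.prod μl), q ∈ Set.Ioc (0:ℝ) t ×ˢ Set.Ioc (0:ℝ) l := by
    rw [hμt, hμl, Measure.prod_restrict]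
    exact ae_restrict_mem (measurableSet_Ioc.prod measurableSet_Ioc)
  have hprod_int : Integrable
      (fun q : ℝ × ℝ => (t - q.1) ^ (-α) * (ut q.2 q.1 * ω q.2)) (μt.prod μl) := by
    have h1 : AEStronglyMeasurable (fun q : ℝ × ℝ => (t - q.1) ^ (-α)) (μt.prod μl) :=
      hpow_iOn.aestronglyMeasurable.comp_fst
    have h2 : AEStronglyMeasurable (fun q : ℝ × ℝ => ut q.2 q.1 * ω q.2) (μt.prod μl) := by
      have hc : ContinuousOn (fun q : ℝ × ℝ => ut q.2 q.1 * ω q.2)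
          (Set.Icc 0 T ×ˢ Set.Icc 0 l) := by
        refine ContinuousOn.mul ?_ (hω_c.comp continuous_snd.continuousOn (fun q hq => hq.2))
        exact hut_cont.comp continuous_swap.continuousOn
          (fun q hq => Set.mk_mem_prod hq.2 hq.1)
      have := hc.aestronglyMeasurable (μ := volume.prod volume)
        (measurableSet_Icc.prod measurableSet_Icc)
      rw [hμt, hμl, Measure.prod_restrict]
      refine this.mono_measure (Measure.restrict_mono ?_ le_rfl)
      exact Set.prod_mono (fun s hs => ⟨hs.1.le, hs.2.trans htT⟩)
        (fun x hx => Set.Ioc_subset_Icc_self hx)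
    have hbnd : Integrable (fun q : ℝ × ℝ => (t - q.1) ^ (-α) * C) (μt.prod μl) := by
      rw [hμt, hμl]
      exact Integrable.mul_prod hpow_iOn (integrableOn_const measure_Ioc_lt_top.ne)
    refine hbnd.mono' (h1.mul h2) ?_
    filter_upwards [haemem] with q hq
    have hpow_nn : (0:ℝ) ≤ (t - q.1) ^ (-α) :=
      Real.rpow_nonneg (by linarith [hq.1.2]) _
    have hm : ‖ut q.2 q.1 * ω q.2‖ ≤ C :=
      hC (q.2, q.1) (Set.mk_mem_prod (Set.Ioc_subset_Icc_self hq.2)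
        ⟨hq.1.1.le, hq.1.2.trans htT⟩)
    rw [norm_mul, Real.norm_eq_abs ((t - q.1) ^ (-α)), abs_of_nonneg hpow_nn]
    exact mul_le_mul_of_nonneg_left hm hpow_nn
  have hswap : (∫ s, (∫ x, (t - s) ^ (-α) * (ut x s * ω x) ∂μl) ∂μt)
      = ∫ x, (∫ s, (t - s) ^ (-α) * (ut x s * ω x) ∂μt) ∂μl :=
    integral_integral_swap hprod_int
  -- put things together : the fractional derivative of g as an x-integral
  have hstep2 : (∫ s in (0:ℝ)..t, (t - s) ^ (-α) * ∫ x in (0:ℝ)..l, ut x s * ω x)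
      = ∫ x in (0:ℝ)..l, ω x * ∫ s in (0:ℝ)..t, (t - s) ^ (-α) * ut x s := by
    have hconv : ∀ s, (∫ x in (0:ℝ)..l, ut x s * ω x) = ∫ x, ut x s * ω x ∂μl :=
      fun s => intervalIntegral.integral_of_le hl0
    have hconv2 : ∀ x, (∫ s in (0:ℝ)..t, (t - s) ^ (-α) * ut x s)
        = ∫ s, (t - s) ^ (-α) * ut x s ∂μt :=
      fun x => intervalIntegral.integral_of_le ht0.le
    have houter : (∫ s in (0:ℝ)..t, ((t - s) ^ (-α) * ∫ x, ut x s * ω x ∂μl))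
        = ∫ s, ((t - s) ^ (-α) * ∫ x, ut x s * ω x ∂μl) ∂μt :=
      intervalIntegral.integral_of_le ht0.le
    have houter2 : (∫ x in (0:ℝ)..l, (ω x * ∫ s, (t - s) ^ (-α) * ut x s ∂μt))
        = ∫ x, (ω x * ∫ s, (t - s) ^ (-α) * ut x s ∂μt) ∂μl :=
      intervalIntegral.integral_of_le hl0
    have e1 : (∫ s, ((t - s) ^ (-α) * ∫ x, ut x s * ω x ∂μl) ∂μt)
        = ∫ s, (∫ x, (t - s) ^ (-α) * (ut x s * ω x) ∂μl) ∂μt :=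
      integral_congr_ae (Filter.Eventually.of_forall fun s => (integral_const_mul _ _).symm)
    have e2 : (∫ x, (∫ s, (t - s) ^ (-α) * (ut x s * ω x) ∂μt) ∂μl)
        = ∫ x, (ω x * ∫ s, (t - s) ^ (-α) * ut x s ∂μt) ∂μl :=
      integral_congr_ae (Filter.Eventually.of_forall fun x =>
        Eq.trans (integral_congr_ae (Filter.Eventually.of_forall fun s => by ring))
          (integral_const_mul _ _))
    simp_rw [hconv, hconv2, houter, houter2]
    exact (e1.trans hswap).trans e2
  -- use the PDE
  have hint_f : IntervalIntegrable (fun x => ω x * f x t) volume 0 l :=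
    intInt (hω_c.mul hf_c)
  have hint_uxx : IntervalIntegrable (fun x => ω x * uxx x t) volume 0 l :=
    intInt (hω_c.mul (huxx_cont t htmem))
  have hint_u : IntervalIntegrable (fun x => ω x * u x t) volume 0 l :=
    intInt (hω_c.mul (hu_c t htmem))
  have hstep3 : (1 / Real.Gamma (1 - α)) *
        (∫ x in (0:ℝ)..l, ω x * ∫ s in (0:ℝ)..t, (t - s) ^ (-α) * ut x s)
      = (∫ x in (0:ℝ)..l, ω x * f x t) + (∫ x in (0:ℝ)..l, ω x * uxx x t)
        - p t * ∫ x in (0:ℝ)..l, ω x * u x t := by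
    rw [← intervalIntegral.integral_const_mul]
    have hcongr : (∫ x in (0:ℝ)..l, (1 / Real.Gamma (1 - α)) *
          (ω x * ∫ s in (0:ℝ)..t, (t - s) ^ (-α) * ut x s))
        = ∫ x in (0:ℝ)..l, ((ω x * f x t + ω x * uxx x t) - p t * (ω x * u x t)) := by
      apply intervalIntegral.integral_congr_ae
      have hlne : ∀ᵐ x : ℝ, x ≠ l := by
        refine ae_iff.mpr ?_
        rw [show {a : ℝ | ¬ a ≠ l} = {l} by ext a; simp]
        exact measure_singleton l
      filter_upwards [hlne] with x hxne hx
      rw [hIoc] at hx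
      have hxIoo : x ∈ Set.Ioo (0:ℝ) l := ⟨hx.1, lt_of_le_of_ne hx.2 hxne⟩
      have hpde := hPDE x hxIoo t ⟨ht0, htT⟩
      have hI : (1 / Real.Gamma (1 - α)) * (∫ s in (0:ℝ)..t, (t - s) ^ (-α) * ut x s)
          = f x t + uxx x t - p t * u x t := by linarith
      calc (1 / Real.Gamma (1 - α)) * (ω x * ∫ s in (0:ℝ)..t, (t - s) ^ (-α) * ut x s)
          = ω x * ((1 / Real.Gamma (1 - α)) *
              ∫ s in (0:ℝ)..t, (t - s) ^ (-α) * ut x s) := by ring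
        _ = ω x * (f x t + uxx x t - p t * u x t) := by rw [hI]
        _ = (ω x * f x t + ω x * uxx x t) - p t * (ω x * u x t) := by ring
    rw [hcongr, intervalIntegral.integral_sub (hint_f.add hint_uxx) (hint_u.const_mul _),
      intervalIntegral.integral_add hint_f hint_uxx, intervalIntegral.integral_const_mul]
  -- integration by parts (twice)
  have h1 : (∫ x in (0:ℝ)..l, ω x * uxx x t)
      = ω l * ux l t - ω 0 * ux 0 t - ∫ x in (0:ℝ)..l, ω' x * ux x t := by
    apply intervalIntegral.integral_mul_deriv_eq_deriv_mul
    · intro x hx; exact hω' x (hIcc ▸ hx)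
    · intro x hx; exact huxx t htmem x (hIcc ▸ hx)
    · exact intInt hω'_c
    · exact intInt (huxx_cont t htmem)
  have h2 : (∫ x in (0:ℝ)..l, ω' x * ux x t)
      = ω' l * u l t - ω' 0 * u 0 t - ∫ x in (0:ℝ)..l, ω'' x * u x t := by
    apply intervalIntegral.integral_mul_deriv_eq_deriv_mul
    · intro x hx; exact hω'' x (hIcc ▸ hx)
    · intro x hx; exact hux t htmem x (hIcc ▸ hx)
    · exact intInt hω''_cont
    · exact intInt hux_c
  have hu0 : u 0 t = 0 := (hBC t htmem).1
  have hul : u l t = 0 := (hBC t htmem).2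
  -- assemble
  have hover_t : (∫ x in (0:ℝ)..l, ω x * u x t) = g t := by
    rw [← hover t htmem]
    exact intervalIntegral.integral_congr (fun x _ => mul_comm _ _)
  have hc1 : (∫ x in (0:ℝ)..l, u x t * ω'' x) = ∫ x in (0:ℝ)..l, ω'' x * u x t :=
    intervalIntegral.integral_congr (fun x _ => mul_comm _ _)
  have hc2 : (∫ x in (0:ℝ)..l, f x t * ω x) = ∫ x in (0:ℝ)..l, ω x * f x t :=
    intervalIntegral.integral_congr (fun x _ => mul_comm _ _)
  have hmain : (1 / Real.Gamma (1 - α)) * (∫ s in (0:ℝ)..t, (t - s) ^ (-α) * deriv g s)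
      = (∫ x in (0:ℝ)..l, ω x * f x t)
        + (ω l * ux l t - ω 0 * ux 0 t + ∫ x in (0:ℝ)..l, ω'' x * u x t)
        - p t * g t := by
    rw [hstep1, hstep2, hstep3, h1, h2, hu0, hul, hover_t]
    ring
  rw [eq_div_iff (hg_ne t htmem), hc1, hc2]
  linarith [hmain]
end
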